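/- arXiv:1810.05590 — 9 statements merged into one kernel-verified Lean document; each statement's English description precedes it below -/
import Mathlib

section
/- Let G be a mixed graph on a finite vertex type V. If G has an induced 2-dipath or a pair of obstructing arcs, then there exists a natural number k such that f_o(G,k) ≠ f(U(G),k); in fact f_o(G,k) < f(U(G),k) for some k. -/
/-- Adjacency in a mixed graph with arc relation `A` and edge relation `E`. -/
def MAdj {V : Type*} (A E : V → V → Prop) (u v : V) : Prop :=
  A u v ∨ A v u ∨ E u v

/-- `u` and `w` are the ends of a 2-dipath. -/
def DipathEnds {V : Type*} (A : V → V → Prop) (u w : V) : Prop :=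
  ∃ z, (A u z ∧ A z w) ∨ (A w z ∧ A z u)

/-- An oriented colouring of a mixed graph. -/
def MixedColoring {V : Type*} (A E : V → V → Prop) {k : ℕ} (c : V → Fin k) : Prop :=
  (∀ u v, MAdj A E u v → c u ≠ c v) ∧
  (∀ u v x y, A u v → A x y → c u = c y → c v ≠ c x)

/-- `f_o(G,k)`: the number of oriented `k`-colourings of the mixed graph `G = (V, A, E)`. -/
noncomputable def foM {V : Type*} (A E : V → V → Prop) (k : ℕ) : ℕ :=
  Nat.card {c : V → Fin k // MixedColoring A E c}

/-- The number of proper `k`-colourings of the simple graph with adjacency relation `adj`. -/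
noncomputable def properCount {V : Type*} (adj : V → V → Prop) (k : ℕ) : ℕ :=
  Nat.card {c : V → Fin k // ∀ u v, adj u v → c u ≠ c v}

/-- The arcs `a.1 → a.2` and `b.1 → b.2` form a pair of obstructing arcs. -/
def ObstructingPair {V : Type*} (A E : V → V → Prop) (a b : V × V) : Prop :=
  A a.1 a.2 ∧ A b.1 b.2 ∧
  a.1 ≠ a.2 ∧ a.1 ≠ b.1 ∧ a.1 ≠ b.2 ∧ a.2 ≠ b.1 ∧ a.2 ≠ b.2 ∧ b.1 ≠ b.2 ∧
  ¬ MAdj A E a.1 b.2 ∧ ¬ DipathEnds A a.1 b.2 ∧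
  ¬ MAdj A E a.2 b.1 ∧ ¬ DipathEnds A a.2 b.1

theorem stmt_3 {V : Type*} [Fintype V] (A E : V → V → Prop)
    (hAirr : ∀ u, ¬ A u u) (hAanti : ∀ u v, A u v → ¬ A v u)
    (hEirr : ∀ u, ¬ E u u) (hEsymm : ∀ u v, E u v → E v u)
    (hAE : ∀ u v, (A u v ∨ A v u) → ¬ E u v)
    (hbad : (∃ u w, DipathEnds A u w ∧ ¬ MAdj A E u w) ∨
      (∃ a b : V × V, ObstructingPair A E a b)) :
    (∃ k : ℕ, foM A E k ≠ properCount (MAdj A E) k) ∧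
    (∃ k : ℕ, foM A E k < properCount (MAdj A E) k) := by
  classical
  have hMirr : ∀ x, ¬ MAdj A E x x := by
    intro x h
    rcases h with h | h | h
    · exact hAirr x h
    · exact hAirr x h
    · exact hEirr x h
  have hMsymm : ∀ x y, MAdj A E x y → MAdj A E y x := by
    intro x y h
    rcases h with h | h | h
    · exact Or.inr (Or.inl h)
    · exact Or.inl h
    · exact Or.inr (Or.inr (hEsymm _ _ h))
  set k := Fintype.card V with hk
  let e : V ≃ Fin k := Fintype.equivFin V
  suffices h : ∃ k, foM A E k < properCount (MAdj A E) k by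
    exact ⟨h.imp fun k hk => Nat.ne_of_lt hk, h⟩
  -- It suffices to exhibit a proper colouring that is not a mixed colouring.
  have key : ∀ c : V → Fin k, (∀ u v, MAdj A E u v → c u ≠ c v) →
      ¬ MixedColoring A E c → foM A E k < properCount (MAdj A E) k := by
    intro c hc hnc
    have h1 : foM A E k = Set.ncard {c : V → Fin k | MixedColoring A E c} :=
      (Nat.card_coe_set_eq _).symm
    have h2 : properCount (MAdj A E) k
        = Set.ncard {c : V → Fin k | ∀ u v, MAdj A E u v → c u ≠ c v} :=
      (Nat.card_coe_set_eq _).symm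
    rw [h1, h2]
    apply Set.ncard_lt_ncard _ (Set.toFinite _)
    constructor
    · intro d hd
      exact hd.1
    · intro hsub
      exact hnc (hsub hc)
  rcases hbad with ⟨u, w, ⟨z, hz⟩, hna⟩ | ⟨a, b, hAa, hAb, h12, h11', h12', h21', h22', hb12, hna1, _, hna2, _⟩
  · -- reduce to the case A u z ∧ A z w
    have main : ∀ u z w : V, A u z → A z w → ¬ MAdj A E u w →
        foM A E k < properCount (MAdj A E) k := by
      intro u z w h1 h2 hna
      have huw : u ≠ w := by
        rintro rfl; exact hAanti _ _ h1 h2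
      set c : V → Fin k := fun v => if v = w then e u else e v with hc
      apply key c
      · intro x y hadj hceq
        by_cases hx : x = w
        · by_cases hy : y = w
          · subst hx; subst hy; exact hMirr _ hadj
          · simp only [hc, if_pos hx, if_neg hy] at hceq
            have h' := e.injective hceq
            subst hx; subst h'
            exact hna (hMsymm _ _ hadj)
        · by_cases hy : y = w
          · simp only [hc, if_neg hx, if_pos hy] at hceq
            have h' := e.injective hceq
            subst hy; subst h'
            exact hna hadj
          · simp only [hc, if_neg hx, if_neg hy] at hceq
            have h' := e.injective hceq
            subst h'
            exact hMirr _ hadj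
      · rintro ⟨_, hcond⟩
        apply hcond u z z w h1 h2 _ rfl
        simp only [hc, if_neg huw, if_pos rfl]
    rcases hz with ⟨h1, h2⟩ | ⟨h1, h2⟩
    · exact ⟨k, main u z w h1 h2 hna⟩
    · exact ⟨k, main w z u h1 h2 (fun h => hna (hMsymm _ _ h))⟩
  · refine ⟨k, ?_⟩
    set σ : V → V := fun v => if v = b.2 then a.1 else if v = b.1 then a.2 else v with hσ
    set c : V → Fin k := fun v => e (σ v) with hc
    have hσcase : ∀ x y : V, σ x = σ y → x = y ∨ (x = a.1 ∧ y = b.2) ∨ (x = b.2 ∧ y = a.1)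
        ∨ (x = a.2 ∧ y = b.1) ∨ (x = b.1 ∧ y = a.2) := by
      intro x y h
      simp only [hσ] at h
      split_ifs at h <;> simp_all <;> tauto
    apply key c
    · intro x y hadj hceq
      have := hσcase x y (e.injective hceq)
      rcases this with rfl | ⟨rfl, rfl⟩ | ⟨rfl, rfl⟩ | ⟨rfl, rfl⟩ | ⟨rfl, rfl⟩
      · exact hMirr _ hadj
      · exact hna1 hadj
      · exact hna1 (hMsymm _ _ hadj)
      · exact hna2 hadj
      · exact hna2 (hMsymm _ _ hadj)
    · rintro ⟨_, hcond⟩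
      apply hcond a.1 a.2 b.1 b.2 hAa hAb
      · simp [hc, hσ, h12', h11']
      · simp [hc, hσ, h22', h21', hb12]
end

section
/- Let G be an oriented graph on a finite vertex type V, and let G* be the mixed graph obtained from G by keeping all arcs of G and adding an edge between u and w for every unordered pair {u,w} of non-adjacent vertices that are the ends of a 2-dipath. Then f_o(G,k) = f_o(G*,k) for every natural number k. -/
/-- Adjacency in an oriented graph with arc relation `A`. -/
def OAdj {V : Type*} (A : V → V → Prop) (u v : V) : Prop :=
  A u v ∨ A v u

/-- An oriented colouring of an oriented graph. -/
def OColoring {V : Type*} (A : V → V → Prop) {k : ℕ} (c : V → Fin k) : Prop :=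
  (∀ u v, A u v → c u ≠ c v) ∧
  (∀ u v x y, A u v → A x y → c u = c y → c v ≠ c x)

/-- The number of oriented `k`-colourings of the oriented graph `G = (V, A)`. -/
noncomputable def foO {V : Type*} (A : V → V → Prop) (k : ℕ) : ℕ :=
  Nat.card {c : V → Fin k // OColoring A c}

theorem stmt_4 {V : Type*} [Fintype V] (A : V → V → Prop)
    (hAirr : ∀ u, ¬ A u u) (hAanti : ∀ u v, A u v → ¬ A v u) :
    ∀ k : ℕ, foO A k = foM A (fun u w => ¬ OAdj A u w ∧ DipathEnds A u w) k := by
  intro k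
  unfold foO foM
  have : OColoring A (k := k) = MixedColoring A (fun u w => ¬ OAdj A u w ∧ DipathEnds A u w) := by
    funext c
    apply propext
    constructor
    · rintro ⟨h1, h2⟩
      refine ⟨fun u v hadj => ?_, h2⟩
      rcases hadj with h | h | ⟨hna, z, ⟨ha, hb⟩ | ⟨ha, hb⟩⟩
      · exact h1 u v h
      · exact (h1 v u h).symm
      · intro hc; exact h2 u z z v ha hb hc rfl
      · intro hc; exact h2 v z z u ha hb hc.symm rfl
    · rintro ⟨h1, h2⟩
      exact ⟨fun u v h => h1 u v (Or.inl h), h2⟩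
  rw [this]
end

section
/- An oriented graph G on a finite vertex type V is chromatically invariant if and only if G has no induced 2-dipath and the underlying simple graph U(G) is 2K2-free. -/
lemma card_iff {V : Type*} [Fintype V] (A : V → V → Prop) (k : ℕ) :
    foO A k = properCount (OAdj A) k ↔
      ∀ c : V → Fin k, (∀ u v, OAdj A u v → c u ≠ c v) → OColoring A c := by
  classical
  set S : Set (V → Fin k) := {c | OColoring A c} with hS
  set T : Set (V → Fin k) := {c | ∀ u v, OAdj A u v → c u ≠ c v} with hT
  have hsub : S ⊆ T := by
    rintro c ⟨h1, _⟩
    intro u v huv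
    rcases huv with h | h
    · exact h1 u v h
    · exact fun he => h1 v u h he.symm
  have hfo : foO A k = S.ncard := (Nat.card_coe_set_eq S).symm
  have hpc : properCount (OAdj A) k = T.ncard := (Nat.card_coe_set_eq T).symm
  rw [hfo, hpc]
  constructor
  · intro h c hc
    have : S = T := Set.eq_of_subset_of_ncard_le hsub h.ge (Set.toFinite T)
    have : c ∈ S := this ▸ hc
    exact this
  · intro h
    have : T ⊆ S := fun c hc => h c hc
    rw [Set.Subset.antisymm hsub this]

/-- A 2-dipath gives a proper non-oriented colouring. -/
lemma bad_dipath {V : Type*} [Fintype V] (A : V → V → Prop)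
    (hAanti : ∀ u v, A u v → ¬ A v u)
    (u z w : V) (huz : A u z) (hzw : A z w) (hnuw : ¬ OAdj A u w) :
    ∃ c : V → Fin (Fintype.card V),
      (∀ s t, OAdj A s t → c s ≠ c t) ∧ ¬ OColoring A c := by
  classical
  have huw : u ≠ w := by
    rintro rfl
    exact hAanti u z huz hzw
  let e : V ≃ Fin (Fintype.card V) := Fintype.equivFin V
  refine ⟨fun x => if x = w then e u else e x, ?_, ?_⟩
  · intro s t hst he
    have hstne : s ≠ t := by
      rintro rfl
      rcases hst with h | h <;> exact hAanti s s h h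
    by_cases hs : s = w <;> by_cases ht : t = w <;> simp [hs, ht] at he
    · exact hstne (hs.trans ht.symm)
    · subst hs
      subst he
      exact hnuw (Or.symm hst)
    · subst ht
      subst he
      exact hnuw hst
    · exact hstne he
  · rintro ⟨-, h2⟩
    have hcu : (fun x => if x = w then e u else e x) u = e u := by simp [huw]
    have hcw : (fun x => if x = w then e u else e x) w = e u := by simp
    exact h2 u z z w huz hzw (hcu.trans hcw.symm) rfl

/-- A suitably non-adjacent pair of arcs gives a proper non-oriented colouring. -/
lemma bad_pair {V : Type*} [Fintype V] (A : V → V → Prop)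
    (hAirr : ∀ u, ¬ A u u)
    (a b p q : V) (hab : A a b) (hpq : A p q)
    (hap : a ≠ p) (haq : a ≠ q) (hbp : b ≠ p) (hbq : b ≠ q)
    (hnaq : ¬ OAdj A a q) (hnbp : ¬ OAdj A b p) :
    ∃ c : V → Fin (Fintype.card V),
      (∀ s t, OAdj A s t → c s ≠ c t) ∧ ¬ OColoring A c := by
  classical
  have habne : a ≠ b := by rintro rfl; exact hAirr a hab
  have hpqne : p ≠ q := by rintro rfl; exact hAirr p hpq
  let e : V ≃ Fin (Fintype.card V) := Fintype.equivFin V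
  set c : V → Fin (Fintype.card V) :=
    fun x => if x = q then e a else if x = p then e b else e x with hc
  have hca : c a = e a := by simp [hc, haq, hap]
  have hcb : c b = e b := by simp [hc, hbq, hbp]
  have hcp : c p = e b := by simp [hc, hpqne]
  have hcq : c q = e a := by simp [hc]
  refine ⟨c, ?_, ?_⟩
  · intro s t hst he
    have hstne : s ≠ t := by
      rintro rfl
      rcases hst with h | h <;> exact hAirr s h
    have hsymm : OAdj A t s := Or.symm hst
    by_cases hs : s = q
    · subst hs
      by_cases ht : t = p
      · subst ht
        rw [hcq, hcp] at he
        exact habne (e.injective he)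
      · have : c t = e t := by simp [hc, Ne.symm hstne, ht]
        rw [hcq, this] at he
        have : a = t := e.injective he
        subst this
        exact hnaq hsymm
    · by_cases hs' : s = p
      · subst hs'
        by_cases ht : t = q
        · subst ht
          rw [hcp, hcq] at he
          exact habne (e.injective he.symm)
        · have : c t = e t := by simp [hc, ht, Ne.symm hstne]
          rw [hcp, this] at he
          have : b = t := e.injective he
          subst this
          exact hnbp hsymm
      · have hcs : c s = e s := by simp [hc, hs, hs']
        by_cases ht : t = q
        · subst ht
          rw [hcs, hcq] at he
          have : s = a := e.injective he
          subst this
          exact hnaq hst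
        · by_cases ht' : t = p
          · subst ht'
            rw [hcs, hcp] at he
            have : s = b := e.injective he
            subst this
            exact hnbp hst
          · have : c t = e t := by simp [hc, ht, ht']
            rw [hcs, this] at he
            exact hstne (e.injective he)
  · rintro ⟨-, h2⟩
    exact h2 a b p q hab hpq (hca.trans hcq.symm) (hcb.trans hcp.symm)

theorem stmt_6 {V : Type*} [Fintype V] (A : V → V → Prop)
    (hAirr : ∀ u, ¬ A u u) (hAanti : ∀ u v, A u v → ¬ A v u) :
    (∀ k : ℕ, foO A k = properCount (OAdj A) k) ↔
      ((¬ ∃ u z w, A u z ∧ A z w ∧ ¬ OAdj A u w) ∧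
        ¬ ∃ u v x y : V,
          u ≠ v ∧ u ≠ x ∧ u ≠ y ∧ v ≠ x ∧ v ≠ y ∧ x ≠ y ∧
          OAdj A u v ∧ OAdj A x y ∧
          ¬ OAdj A u x ∧ ¬ OAdj A u y ∧ ¬ OAdj A v x ∧ ¬ OAdj A v y) := by
  classical
  constructor
  · intro h
    constructor
    · rintro ⟨u, z, w, huz, hzw, hnuw⟩
      obtain ⟨c, hcp, hcno⟩ := bad_dipath A hAanti u z w huz hzw hnuw
      exact hcno ((card_iff A _).mp (h _) c hcp)
    · rintro ⟨u, v, x, y, huv, hux, huy, hvx, hvy, hxy, hauv, haxy, n1, n2, n3, n4⟩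
      obtain ⟨c, hcp, hcno⟩ : ∃ c : V → Fin (Fintype.card V),
          (∀ s t, OAdj A s t → c s ≠ c t) ∧ ¬ OColoring A c := by
        rcases hauv with h1 | h1 <;> rcases haxy with h2 | h2
        · exact bad_pair A hAirr u v x y h1 h2 hux huy hvx hvy n2 n3
        · exact bad_pair A hAirr u v y x h1 h2 huy hux hvy hvx n1 n4
        · exact bad_pair A hAirr v u x y h1 h2 hvx hvy hux huy n4 n1
        · exact bad_pair A hAirr v u y x h1 h2 hvy hvx huy hux n3 n2
      exact hcno ((card_iff A _).mp (h _) c hcp)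
  · rintro ⟨hnd, hn2⟩ k
    rw [card_iff]
    intro c hc
    refine ⟨fun u v huv => hc u v (Or.inl huv), ?_⟩
    intro u v x y huv hxy hcucy hcvcx
    -- derive a contradiction from hcvcx : c v = c x
    have hOsymm : ∀ s t, OAdj A s t → OAdj A t s := fun s t h => h.symm.imp id id
    have huvne : u ≠ v := by rintro rfl; exact hAirr u huv
    have hxyne : x ≠ y := by rintro rfl; exact hAirr x hxy
    by_cases huy : u = y
    · subst huy
      -- arcs x → u → v ; if ¬ adj x v, dipath
      by_cases hxv : OAdj A x v
      · exact hc x v hxv hcvcx.symm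
      · exact hnd ⟨x, u, v, hxy, huv, hxv⟩
    by_cases hvx : v = x
    · subst hvx
      by_cases huy' : OAdj A u y
      · exact hc u y huy' hcucy
      · exact hnd ⟨u, v, y, huv, hxy, huy'⟩
    have huxne : u ≠ x := by
      rintro rfl
      exact hc u y (Or.inl hxy) hcucy
    have hvyne : v ≠ y := by
      rintro rfl
      exact hc u v (Or.inl huv) hcucy
    have hnuy : ¬ OAdj A u y := fun h => hc u y h hcucy
    have hnvx : ¬ OAdj A v x := fun h => hc v x h hcvcx
    have hnxv : ¬ OAdj A x v := fun h => hnvx (hOsymm _ _ h)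
    by_cases hux : OAdj A u x
    · rcases hux with h | h
      · exact hnd ⟨u, x, y, h, hxy, hnuy⟩
      · exact hnd ⟨x, u, v, h, huv, hnxv⟩
    by_cases hvy : OAdj A v y
    · rcases hvy with h | h
      · exact hnd ⟨u, v, y, huv, h, hnuy⟩
      · exact hnd ⟨x, y, v, hxy, h, hnxv⟩
    exact hn2 ⟨u, v, x, y, huvne, huxne, huy, hvx, hvyne, hxyne,
      Or.inl huv, Or.inl hxy, hux, hnuy, hnvx, hvy⟩
end

section
/- A finite simple graph Γ admits a quasi-transitive orientation if and only if Γ is a comparability graph. -/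
namespace GH

open Relation

variable {V : Type*}

/-- One forcing step between oriented edges. -/
def Fstep (adj : V → V → Prop) (e f : V × V) : Prop :=
  adj e.1 e.2 ∧ adj f.1 f.2 ∧
    ((e.1 = f.1 ∧ ¬ adj e.2 f.2) ∨ (e.2 = f.2 ∧ ¬ adj e.1 f.1))

/-- Same implication class. -/
def Cls (adj : V → V → Prop) (e f : V × V) : Prop := ReflTransGen (Fstep adj) e f

section Basic

variable {adj : V → V → Prop}

lemma fstep_symm (hsym : Symmetric adj) {e f} (h : Fstep adj e f) : Fstep adj f e := by
  obtain ⟨h1, h2, h3⟩ := h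
  refine ⟨h2, h1, ?_⟩
  rcases h3 with ⟨h4, h5⟩ | ⟨h4, h5⟩
  · exact Or.inl ⟨h4.symm, fun hc => h5 (hsym hc)⟩
  · exact Or.inr ⟨h4.symm, fun hc => h5 (hsym hc)⟩

lemma cls_symm (hsym : Symmetric adj) {e f} (h : Cls adj e f) : Cls adj f e :=
  by haveI : Std.Symm (Fstep adj) := ⟨fun _ _ hh => fstep_symm hsym hh⟩; exact (ReflTransGen.symmetric).symm _ _ h

lemma cls_adj {e f} (he : adj e.1 e.2) (h : Cls adj e f) : adj f.1 f.2 := by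
  induction h with
  | refl => exact he
  | tail _ hstep _ => exact hstep.2.1

lemma fstep_swap (hsym : Symmetric adj) {e f} (h : Fstep adj e f) :
    Fstep adj e.swap f.swap := by
  obtain ⟨h1, h2, h3⟩ := h
  refine ⟨hsym h1, hsym h2, ?_⟩
  rcases h3 with ⟨h4, h5⟩ | ⟨h4, h5⟩
  · exact Or.inr ⟨h4, h5⟩
  · exact Or.inl ⟨h4, h5⟩

lemma cls_swap (hsym : Symmetric adj) {e f} (h : Cls adj e f) : Cls adj e.swap f.swap := by
  induction h with
  | refl => exact ReflTransGen.refl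
  | tail _ hstep ih => exact ih.tail (fstep_swap hsym hstep)

end Basic

/-- A quasi-transitive orientation of `adj`. -/
structure QTO (adj A : V → V → Prop) : Prop where
  sym : Symmetric adj
  irr : Irreflexive adj
  tot : ∀ u v, adj u v → A u v ∨ A v u
  sub : ∀ u v, A u v → adj u v
  asym : ∀ u v, A u v → ¬ A v u
  qt : ∀ u z w, A u z → A z w → u ≠ w → adj u w

section Oriented

variable {adj A : V → V → Prop} (H : QTO adj A)

include H

lemma aside {e f} (hA : A e.1 e.2) (h : Cls adj e f) : A f.1 f.2 := by
  induction h with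
  | refl => exact hA
  | tail _ hstep ih =>
    rename_i e' f' _
    rcases hstep.2.2 with ⟨heq, hnadj⟩ | ⟨heq, hnadj⟩
    · by_cases hv : f'.2 = e'.2
      · have h2 : A f'.1 e'.2 := heq ▸ ih
        rw [← hv] at h2; exact h2
      · rcases H.tot _ _ hstep.2.1 with h1 | h1
        · exact h1
        · exfalso
          have hA2 : A f'.1 e'.2 := heq ▸ ih
          have : adj f'.2 e'.2 := H.qt _ _ _ h1 hA2 hv
          exact hnadj (H.sym this)
    · by_cases hv : f'.1 = e'.1
      · have h2 : A e'.1 f'.2 := heq ▸ ih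
        rw [← hv] at h2; exact h2
      · rcases H.tot _ _ hstep.2.1 with h1 | h1
        · exact h1
        · exfalso
          have hA2 : A e'.1 f'.2 := heq ▸ ih
          have : adj e'.1 f'.1 := H.qt _ _ _ hA2 h1 (fun hc => hv hc.symm)
          exact hnadj this
  
lemma asideIff {e f} (h : Cls adj e f) : A e.1 e.2 ↔ A f.1 f.2 :=
  ⟨fun hA => aside H hA h, fun hA => aside H hA (cls_symm H.sym h)⟩

end Oriented

/-- The Triangle Lemma. -/
lemma TL {adj : V → V → Prop} (hsym : Symmetric adj) (a b c : V)
    (hab : adj a b) (hac : adj a c) (_hbc : adj b c)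
    (hAB : ¬ Cls adj (b, c) (a, c)) (hAC : ¬ Cls adj (b, c) (b, a)) :
    ∀ e, Cls adj (b, c) e →
      adj a e.1 ∧ adj a e.2 ∧ Cls adj (a, b) (a, e.1) ∧ Cls adj (a, c) (a, e.2) := by
  intro e h
  induction h with
  | refl => exact ⟨hab, hac, ReflTransGen.refl, ReflTransGen.refl⟩
  | tail hprev hstep ih =>
    rename_i e' f' 
    obtain ⟨ihb, ihc, ihB, ihC⟩ := ih
    rcases hstep.2.2 with ⟨heq, hnadj⟩ | ⟨heq, hnadj⟩
    · -- head fixed : f'.1 = e'.1, new second component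
      have hb' : adj a f'.1 := heq ▸ ihb
      have hc' : adj a f'.2 := by
        by_contra hno
        have step2 : Fstep adj f' (f'.1, a) :=
          ⟨hstep.2.1, hsym hb', Or.inl ⟨rfl, fun hc' => hno (hsym hc')⟩⟩
        have hcl : Cls adj (b, c) (f'.1, a) := (hprev.tail hstep).tail step2
        have : Cls adj (b, a) (e'.1, a) := cls_swap hsym ihB
        have : Cls adj (e'.1, a) (b, a) := cls_symm hsym this
        exact hAC (hcl.trans (heq ▸ this))
      refine ⟨hb', hc', heq ▸ ihB, ?_⟩
      have step3 : Fstep adj (a, e'.2) (a, f'.2) := ⟨ihc, hc', Or.inl ⟨rfl, hnadj⟩⟩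
      exact ihC.tail step3
    · -- second fixed : f'.2 = e'.2, new first component
      have hc' : adj a f'.2 := heq ▸ ihc
      have hb' : adj a f'.1 := by
        by_contra hno
        have step2 : Fstep adj f' (a, f'.2) :=
          ⟨hstep.2.1, hc', Or.inr ⟨rfl, fun hx => hno (hsym hx)⟩⟩
        have hcl : Cls adj (b, c) (a, f'.2) := (hprev.tail hstep).tail step2
        have : Cls adj (a, e'.2) (a, c) := cls_symm hsym ihC
        exact hAB (hcl.trans (heq ▸ this))
      refine ⟨hb', hc', ?_, heq ▸ ihC⟩
      have step3 : Fstep adj (a, e'.1) (a, f'.1) := ⟨ihb, hb', Or.inl ⟨rfl, hnadj⟩⟩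
      exact ihB.tail step3


section Class

variable (adj A : V → V → Prop) (a0 b0 : V)

/-- membership in the oriented class of `(a0,b0)`. -/
def InC (f : V × V) : Prop := Cls adj (a0, b0) f

/-- membership in the unoriented class of the edge `a0 b0`. -/
def InCh (f : V × V) : Prop := InC adj a0 b0 f ∨ InC adj a0 b0 f.swap

/-- the reduced graph: `adj` minus the class of `a0 b0`. -/
def Radj (u v : V) : Prop := adj u v ∧ ¬ InCh adj a0 b0 (u, v)

/-- misaligned common neighbours of `a0` and `b0`. -/
def MW (x : V) : Prop :=
  adj x a0 ∧ adj x b0 ∧ ¬ InCh adj a0 b0 (x, a0) ∧ ¬ InCh adj a0 b0 (x, b0) ∧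
    ¬ (A x a0 ↔ A x b0)

/-- edges whose class must be flipped. -/
def FLIP (f : V × V) : Prop :=
  ∃ x, MW adj A a0 b0 x ∧ (Cls adj (x, b0) f ∨ Cls adj (x, b0) f.swap)

/-- the repaired orientation of the reduced graph. -/
def Aor (u v : V) : Prop :=
  Radj adj a0 b0 u v ∧
    ((A u v ∧ ¬ FLIP adj A a0 b0 (u, v)) ∨ (A v u ∧ FLIP adj A a0 b0 (u, v)))

end Class

section ClassLemmas

variable {adj A : V → V → Prop} {a0 b0 : V}

lemma inch_pair {u v : V} (h : InCh adj a0 b0 (u, v)) : InCh adj a0 b0 (v, u) := by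
  rcases h with h | h
  · exact Or.inr h
  · exact Or.inl h

lemma flip_pair {u v : V} (h : FLIP adj A a0 b0 (u, v)) : FLIP adj A a0 b0 (v, u) := by
  obtain ⟨x, hx, h | h⟩ := h
  · exact ⟨x, hx, Or.inr h⟩
  · exact ⟨x, hx, Or.inl h⟩

lemma flip_cls (hsym : Symmetric adj) {f g : V × V} (hfg : Cls adj f g)
    (h : FLIP adj A a0 b0 f) : FLIP adj A a0 b0 g := by
  obtain ⟨x, hx, h | h⟩ := h
  · exact ⟨x, hx, Or.inl (h.trans hfg)⟩
  · exact ⟨x, hx, Or.inr (h.trans (cls_swap hsym hfg))⟩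

variable (H : QTO adj A) (hA0 : A a0 b0)

include H hA0

lemma inc_A {u v : V} (h : InC adj a0 b0 (u, v)) : A u v := aside H hA0 h

lemma inc_adj {u v : V} (h : InC adj a0 b0 (u, v)) : adj u v :=
  cls_adj (H.sub _ _ hA0) h

lemma inc_ne {u v : V} (h : InC adj a0 b0 (u, v)) : u ≠ v := by
  intro he
  subst he
  exact H.irr u (inc_adj H hA0 h)

lemma transport {x y y' : V} (h1 : adj x y) (h2 : adj x y')
    (h3 : ¬ InCh adj a0 b0 (x, y)) (h4 : ¬ InCh adj a0 b0 (x, y'))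
    (h5 : InC adj a0 b0 (y, y')) :
    adj x a0 ∧ adj x b0 ∧ ¬ InCh adj a0 b0 (x, a0) ∧ ¬ InCh adj a0 b0 (x, b0) ∧
      Cls adj (x, y) (x, a0) ∧ Cls adj (x, y') (x, b0) := by
  have hedge : adj y y' := inc_adj H hA0 h5
  have hAB : ¬ Cls adj (y, y') (x, y') := fun hc => h4 (Or.inl (h5.trans hc))
  have hAC : ¬ Cls adj (y, y') (y, x) := fun hc => h3 (Or.inr (h5.trans hc))
  obtain ⟨ha, hb, hclA, hclB⟩ :=
    TL H.sym x y y' h1 h2 hedge hAB hAC (a0, b0) (cls_symm H.sym h5)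
  refine ⟨ha, hb, ?_, ?_, hclA, hclB⟩
  · rintro (hin | hin)
    · exact h3 (Or.inl (hin.trans (cls_symm H.sym hclA)))
    · exact h3 (Or.inr (hin.trans (cls_symm H.sym (cls_swap H.sym hclA))))
  · rintro (hin | hin)
    · exact h4 (Or.inl (hin.trans (cls_symm H.sym hclB)))
    · exact h4 (Or.inr (hin.trans (cls_symm H.sym (cls_swap H.sym hclB))))

lemma Qclass {x : V} (hx : MW adj A a0 b0 x) {e : V × V} (he : Cls adj (x, b0) e) :
    adj a0 e.1 ∧ adj a0 e.2 ∧ Cls adj (a0, x) (a0, e.1) := by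
  have hAB : ¬ Cls adj (x, b0) (a0, b0) := fun hc => hx.2.2.2.1 (Or.inl (cls_symm H.sym hc))
  have hAC : ¬ Cls adj (x, b0) (x, a0) := fun hc => hx.2.2.2.2 ((asideIff H hc).symm)
  obtain ⟨h1, h2, h3, _⟩ :=
    TL H.sym a0 x b0 (H.sym hx.1) (H.sub _ _ hA0) hx.2.1 hAB hAC e he
  exact ⟨h1, h2, h3⟩

lemma Qa0 {x : V} (hx : MW adj A a0 b0 x) {e : V × V} (he : Cls adj (x, b0) e) :
    e.1 ≠ a0 ∧ e.2 ≠ a0 ∧ e.1 ≠ b0 := by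
  obtain ⟨h1, h2, h3⟩ := Qclass H hA0 hx he
  refine ⟨fun hc => H.irr a0 (hc ▸ h1), fun hc => H.irr a0 (hc ▸ h2), fun hc => ?_⟩
  rw [hc] at h3
  exact hx.2.2.1 (Or.inr (cls_symm H.sym h3))

lemma misalign_transfer {x v : V} (hx : MW adj A a0 b0 x)
    (hva : adj v a0) (hvb : adj v b0) (h3 : ¬ InCh adj a0 b0 (v, a0))
    (h4 : ¬ InCh adj a0 b0 (v, b0)) (hcl : Cls adj (x, b0) (v, b0)) :
    MW adj A a0 b0 v := by
  obtain ⟨_, _, hcls⟩ := Qclass H hA0 hx hcl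
  have i1 : A x a0 ↔ A v a0 := asideIff H (cls_swap H.sym hcls)
  have i2 : A x b0 ↔ A v b0 := asideIff H hcl
  exact ⟨hva, hvb, h3, h4, fun hiff => hx.2.2.2.2 (i1.trans (hiff.trans i2.symm))⟩

end ClassLemmas


section Reduced

variable {adj A : V → V → Prop} {a0 b0 : V} (H : QTO adj A) (hA0 : A a0 b0)

include H hA0

lemma Aor_qt : ∀ u z w, Aor adj A a0 b0 u z → Aor adj A a0 b0 z w → u ≠ w →
    Radj adj a0 b0 u w := by
  intro u z w h1 h2 hne
  obtain ⟨⟨hadjuz, hnuz⟩, hor1⟩ := h1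
  obtain ⟨⟨hadjzw, hnzw⟩, hor2⟩ := h2
  have hnzu : ¬ InCh adj a0 b0 (z, u) := fun hc => hnuz (inch_pair hc)
  -- a single forcing step when u,w are non-adjacent
  have step_uw : ¬ adj u w → Cls adj (z, u) (z, w) := fun hno =>
    ReflTransGen.single ⟨H.sym hadjuz, hadjzw, Or.inl ⟨rfl, hno⟩⟩
  rcases hor1 with ⟨hAuz, hF1⟩ | ⟨hAzu, hF1⟩ <;> rcases hor2 with ⟨hAzw, hF2⟩ | ⟨hAwz, hF2⟩
  · -- both unflipped
    have hadj : adj u w := H.qt u z w hAuz hAzw hne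
    refine ⟨hadj, ?_⟩
    rintro (hin | hin)
    · obtain ⟨hza, hzb, hnza, hnzb, cl1, cl2⟩ :=
        transport H hA0 (H.sym hadjuz) hadjzw hnzu hnzw hin
      have hmw : MW adj A a0 b0 z :=
        ⟨hza, hzb, hnza, hnzb, fun hiff =>
          (H.asym _ _ hAuz) ((asideIff H cl1).mpr (hiff.mpr ((asideIff H cl2).mp hAzw)))⟩
      exact hF2 ⟨z, hmw, Or.inl (cls_symm H.sym cl2)⟩
    · obtain ⟨hza, hzb, hnza, hnzb, cl1, cl2⟩ :=
        transport H hA0 hadjzw (H.sym hadjuz) hnzw hnzu hin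
      have hmw : MW adj A a0 b0 z :=
        ⟨hza, hzb, hnza, hnzb, fun hiff =>
          (H.asym _ _ hAuz) ((asideIff H cl2).mpr (hiff.mp ((asideIff H cl1).mp hAzw)))⟩
      exact hF1 (flip_pair ⟨z, hmw, Or.inl (cls_symm H.sym cl2)⟩)
  · -- first unflipped, second flipped
    have hadj : adj u w := by
      by_contra hno
      exact hF1 (flip_pair (flip_cls H.sym (cls_symm H.sym (step_uw hno)) hF2))
    refine ⟨hadj, ?_⟩
    rintro (hin | hin)
    · obtain ⟨hza, hzb, hnza, hnzb, cl1, cl2⟩ :=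
        transport H hA0 (H.sym hadjuz) hadjzw hnzu hnzw hin
      obtain ⟨x, hx, hc | hc⟩ := hF2
      · have hmw := misalign_transfer H hA0 hx hza hzb hnza hnzb (hc.trans cl2)
        have e1 : ¬ A z a0 := fun hc' => H.asym _ _ hAuz ((asideIff H cl1).mpr hc')
        have e2 : ¬ A z b0 := fun hc' => H.asym _ _ hAwz ((asideIff H cl2).mpr hc')
        exact hmw.2.2.2.2 (iff_of_false e1 e2)
      · exact (Qa0 H hA0 hx (hc.trans (cls_swap H.sym cl2))).2.2 rfl
    · obtain ⟨hza, hzb, hnza, hnzb, cl1, cl2⟩ :=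
        transport H hA0 hadjzw (H.sym hadjuz) hnzw hnzu hin
      obtain ⟨x, hx, hc | hc⟩ := hF2
      · exact (Qa0 H hA0 hx (hc.trans cl1)).2.1 rfl
      · exact (Qa0 H hA0 hx (hc.trans (cls_swap H.sym cl1))).1 rfl
  · -- first flipped, second unflipped
    have hadj : adj u w := by
      by_contra hno
      exact hF2 (flip_cls H.sym (step_uw hno) (flip_pair hF1))
    refine ⟨hadj, ?_⟩
    rintro (hin | hin)
    · obtain ⟨hza, hzb, hnza, hnzb, cl1, cl2⟩ :=
        transport H hA0 (H.sym hadjuz) hadjzw hnzu hnzw hin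
      obtain ⟨x, hx, hc | hc⟩ := flip_pair hF1
      · exact (Qa0 H hA0 hx (hc.trans cl1)).2.1 rfl
      · exact (Qa0 H hA0 hx (hc.trans (cls_swap H.sym cl1))).1 rfl
    · obtain ⟨hza, hzb, hnza, hnzb, cl1, cl2⟩ :=
        transport H hA0 hadjzw (H.sym hadjuz) hnzw hnzu hin
      obtain ⟨x, hx, hc | hc⟩ := flip_pair hF1
      · have hmw := misalign_transfer H hA0 hx hza hzb hnza hnzb (hc.trans cl2)
        have e1 : A z b0 := (asideIff H cl2).mp hAzu
        have e2 : A z a0 := (asideIff H cl1).mp hAzw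
        exact hmw.2.2.2.2 (iff_of_true e2 e1)
      · exact (Qa0 H hA0 hx (hc.trans (cls_swap H.sym cl2))).2.2 rfl
  · -- both flipped
    have hadj : adj u w := H.sym (H.qt w z u hAwz hAzu (Ne.symm hne))
    refine ⟨hadj, ?_⟩
    rintro (hin | hin)
    · obtain ⟨hza, hzb, hnza, hnzb, cl1, cl2⟩ :=
        transport H hA0 (H.sym hadjuz) hadjzw hnzu hnzw hin
      obtain ⟨x, hx, hc | hc⟩ := flip_pair hF1
      · exact (Qa0 H hA0 hx (hc.trans cl1)).2.1 rfl
      · exact (Qa0 H hA0 hx (hc.trans (cls_swap H.sym cl1))).1 rfl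
    · obtain ⟨hza, hzb, hnza, hnzb, cl1, cl2⟩ :=
        transport H hA0 hadjzw (H.sym hadjuz) hnzw hnzu hin
      obtain ⟨x, hx, hc | hc⟩ := hF2
      · exact (Qa0 H hA0 hx (hc.trans cl1)).2.1 rfl
      · exact (Qa0 H hA0 hx (hc.trans (cls_swap H.sym cl1))).1 rfl

theorem QTO_reduced : QTO (Radj adj a0 b0) (Aor adj A a0 b0) := by
  refine ⟨?_, ?_, ?_, ?_, ?_, Aor_qt H hA0⟩
  · intro u v h
    exact ⟨H.sym h.1, fun hc => h.2 (inch_pair hc)⟩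
  · intro u h
    exact H.irr u h.1
  · intro u v h
    by_cases hf : FLIP adj A a0 b0 (u, v)
    · rcases H.tot _ _ h.1 with h1 | h1
      · exact Or.inr ⟨⟨H.sym h.1, fun hc => h.2 (inch_pair hc)⟩, Or.inr ⟨h1, flip_pair hf⟩⟩
      · exact Or.inl ⟨h, Or.inr ⟨h1, hf⟩⟩
    · rcases H.tot _ _ h.1 with h1 | h1
      · exact Or.inl ⟨h, Or.inl ⟨h1, hf⟩⟩
      · refine Or.inr ⟨⟨H.sym h.1, fun hc => h.2 (inch_pair hc)⟩, Or.inl ⟨h1, ?_⟩⟩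
        exact fun hc => hf (flip_pair hc)
  · intro u v h
    exact h.1
  · intro u v h1 h2
    rcases h1.2 with ⟨ha, hf⟩ | ⟨ha, hf⟩ <;> rcases h2.2 with ⟨hb, hg⟩ | ⟨hb, hg⟩
    · exact H.asym _ _ ha hb
    · exact hf (flip_pair hg)
    · exact hg (flip_pair hf)
    · exact H.asym _ _ ha hb

end Reduced


section Lift

variable {adj A : V → V → Prop} {a0 b0 : V} (H : QTO adj A) (hA0 : A a0 b0)

include H hA0

/-- implication classes are transitive. -/
lemma inc_trans {u v w : V} (h1 : InC adj a0 b0 (u, v)) (h2 : InC adj a0 b0 (v, w)) :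
    InC adj a0 b0 (u, w) := by
  have hAuv : A u v := inc_A H hA0 h1
  have hAvw : A v w := inc_A H hA0 h2
  have hne : u ≠ w := by
    rintro rfl
    exact H.asym _ _ hAuv hAvw
  have hadj : adj u w := H.qt _ _ _ hAuv hAvw hne
  by_contra hno
  have hAB : ¬ Cls adj (v, w) (u, w) := fun hc => hno (h2.trans hc)
  have hAC : ¬ Cls adj (v, w) (v, u) := fun hc =>
    H.asym _ _ hAuv (aside H hAvw hc)
  have tl := TL H.sym u v w (H.sub _ _ hAuv) hadj (H.sub _ _ hAvw) hAB hAC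
    (u, v) ((cls_symm H.sym h2).trans h1)
  exact H.irr u tl.1

end Lift

lemma noedge_po (adj : V → V → Prop) (hno : ∀ u v, ¬ adj u v) :
    ∃ r : V → V → Prop, IsPartialOrder V r ∧ ∀ u v, u ≠ v → (adj u v ↔ r u v ∨ r v u) := by
  refine ⟨(· = ·),
    { refl := fun a => rfl, trans := fun a b c h1 h2 => h1.trans h2,
      antisymm := fun a b h _ => h }, ?_⟩
  · intro u v hne
    constructor
    · intro h; exact absurd h (hno u v)
    · rintro (rfl | h)
      · exact absurd rfl hne
      · exact absurd h.symm hne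

theorem key [Fintype V] :
    ∀ (n : ℕ) (adj A : V → V → Prop), QTO adj A →
      Set.ncard {p : V × V | adj p.1 p.2} ≤ n →
      ∃ r : V → V → Prop, IsPartialOrder V r ∧ ∀ u v, u ≠ v → (adj u v ↔ r u v ∨ r v u) := by
  intro n
  induction n with
  | zero =>
    intro adj A H hcard
    refine noedge_po adj fun u v h => ?_
    have h0 : {p : V × V | adj p.1 p.2} = ∅ :=
      (Set.ncard_eq_zero (Set.toFinite _)).mp (Nat.le_zero.mp hcard)
    exact absurd h0 (Set.nonempty_iff_ne_empty.mp ⟨(u, v), h⟩)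
  | succ n ih =>
    intro adj A H hcard
    by_cases hE : ∃ u v, A u v
    · obtain ⟨a0, b0, hA0⟩ := hE
      have H' := QTO_reduced H hA0
      have hss : {p : V × V | Radj adj a0 b0 p.1 p.2} ⊂ {p : V × V | adj p.1 p.2} := by
        constructor
        · intro p hp; exact hp.1
        · intro hsub
          have hmem : (a0, b0) ∈ {p : V × V | adj p.1 p.2} := H.sub _ _ hA0
          exact (hsub hmem).2 (Or.inl ReflTransGen.refl)
      have hcard' : Set.ncard {p : V × V | Radj adj a0 b0 p.1 p.2} ≤ n := by
        have := Set.ncard_lt_ncard hss (Set.toFinite _)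
        omega
      obtain ⟨r', hpo', hm'⟩ := ih (Radj adj a0 b0) (Aor adj A a0 b0) H' hcard'
      -- the lift
      have hT : ∀ u v : V, r' u v → u ≠ v → Radj adj a0 b0 u v :=
        fun u v h hne => (hm' u v hne).mpr (Or.inl h)
      refine ⟨fun u v => (InC adj a0 b0 (u, v) ∨ (r' u v ∧ u ≠ v)) ∨ u = v, ?_, ?_⟩
      · refine { refl := fun a => Or.inr rfl, trans := ?_, antisymm := ?_ }
        · rintro a b c (hab | rfl) (hbc | rfl)
          · -- both strict : the main transitivity argument
            rcases hab with hab | ⟨hab, hne1⟩ <;> rcases hbc with hbc | ⟨hbc, hne2⟩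
            · exact Or.inl (Or.inl (inc_trans H hA0 hab hbc))
            · -- class then order
              have hne : a ≠ c := by
                rintro rfl
                exact (hT _ _ hbc hne2).2 (Or.inr hab)
              have hadjab : adj a b := inc_adj H hA0 hab
              have hradjbc : Radj adj a0 b0 b c := hT _ _ hbc hne2
              have hadj : adj a c := by
                by_contra hno
                have step : Cls adj (a, b) (c, b) :=
                  ReflTransGen.single ⟨hadjab, H.sym hradjbc.1, Or.inr ⟨rfl, hno⟩⟩
                exact hradjbc.2 (Or.inr (hab.trans step))
              by_cases h1 : InC adj a0 b0 (a, c)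
              · exact Or.inl (Or.inl h1)
              by_cases h2 : InC adj a0 b0 (c, a)
              · exact absurd (Or.inr (inc_trans H hA0 h2 hab)) hradjbc.2
              have hradj : Radj adj a0 b0 a c := ⟨hadj, by rintro (hc | hc) <;> [exact h1 hc; exact h2 hc]⟩
              rcases (hm' a c hne).mp hradj with h3 | h3
              · exact Or.inl (Or.inr ⟨h3, hne⟩)
              · exfalso
                have hbv : r' b a := hpo'.trans _ _ _ hbc h3
                have hneba : b ≠ a := Ne.symm (inc_ne H hA0 hab)
                exact (hT _ _ hbv hneba).2 (Or.inr hab)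
            · -- order then class
              have hne : a ≠ c := by
                rintro rfl
                exact (hT _ _ hab hne1).2 (Or.inr hbc)
              have hradjab : Radj adj a0 b0 a b := hT _ _ hab hne1
              have hadjbc : adj b c := inc_adj H hA0 hbc
              have hadj : adj a c := by
                by_contra hno
                have step : Cls adj (b, c) (b, a) :=
                  ReflTransGen.single ⟨hadjbc, H.sym hradjab.1, Or.inl ⟨rfl, fun hx => hno (H.sym hx)⟩⟩
                exact hradjab.2 (Or.inr (hbc.trans step))
              by_cases h1 : InC adj a0 b0 (a, c)
              · exact Or.inl (Or.inl h1)
              by_cases h2 : InC adj a0 b0 (c, a)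
              · exact absurd (Or.inr (inc_trans H hA0 hbc h2)) hradjab.2
              have hradj : Radj adj a0 b0 a c := ⟨hadj, by rintro (hc | hc) <;> [exact h1 hc; exact h2 hc]⟩
              rcases (hm' a c hne).mp hradj with h3 | h3
              · exact Or.inl (Or.inr ⟨h3, hne⟩)
              · exfalso
                have hbv : r' c b := hpo'.trans _ _ _ h3 hab
                have hnecb : c ≠ b := Ne.symm (inc_ne H hA0 hbc)
                exact (hT _ _ hbv hnecb).2 (Or.inr hbc)
            · -- both order
              have h3 : r' a c := hpo'.trans _ _ _ hab hbc
              have hne : a ≠ c := by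
                rintro rfl
                exact hne1 (hpo'.antisymm _ _ hab hbc)
              exact Or.inl (Or.inr ⟨h3, hne⟩)
          · exact Or.inl hab
          · exact Or.inl hbc
          · exact Or.inr rfl
        · rintro a b (hab | rfl) (hba | h)
          · rcases hab with hab | ⟨hab, hne1⟩ <;> rcases hba with hba | ⟨hba, hne2⟩
            · exact absurd (inc_A H hA0 hba) (H.asym _ _ (inc_A H hA0 hab))
            · exact absurd (Or.inr hab) (hT _ _ hba hne2).2
            · exact absurd (Or.inr hba) (hT _ _ hab hne1).2
            · exact hpo'.antisymm _ _ hab hba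
          · exact h.symm
          · rfl
          · rfl
      · intro u v hne
        constructor
        · intro hadj
          by_cases h1 : InC adj a0 b0 (u, v)
          · exact Or.inl (Or.inl (Or.inl h1))
          by_cases h2 : InC adj a0 b0 (v, u)
          · exact Or.inr (Or.inl (Or.inl h2))
          have hradj : Radj adj a0 b0 u v := ⟨hadj, by rintro (hc | hc) <;> [exact h1 hc; exact h2 hc]⟩
          rcases (hm' u v hne).mp hradj with h3 | h3
          · exact Or.inl (Or.inl (Or.inr ⟨h3, hne⟩))
          · exact Or.inr (Or.inl (Or.inr ⟨h3, Ne.symm hne⟩))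
        · rintro (((h | ⟨h, hx⟩) | rfl) | ((h | ⟨h, hx⟩) | rfl))
          · exact inc_adj H hA0 h
          · exact (hT _ _ h hx).1
          · exact absurd rfl hne
          · exact H.sym (inc_adj H hA0 h)
          · exact H.sym (hT _ _ h hx).1
          · exact absurd rfl hne
    · -- no arc at all : no edges
      refine noedge_po adj fun u v h => ?_
      rcases H.tot _ _ h with h1 | h1
      · exact hE ⟨u, v, h1⟩
      · exact hE ⟨v, u, h1⟩

end GH


theorem stmt_7 {V : Type*} [Fintype V] (Γ : SimpleGraph V) :
    (∃ A : V → V → Prop,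
        (∀ u, ¬ A u u) ∧ (∀ u v, A u v → ¬ A v u) ∧
        (∀ u v, Γ.Adj u v ↔ (A u v ∨ A v u)) ∧
        (∀ u z w, A u z → A z w → u ≠ w → (A u w ∨ A w u))) ↔
    (∃ r : V → V → Prop, IsPartialOrder V r ∧
        ∀ u v, u ≠ v → (Γ.Adj u v ↔ (r u v ∨ r v u))) := by
  constructor
  · rintro ⟨A, _hirr, hasym, hmatch, hqt⟩
    have H : GH.QTO Γ.Adj A :=
      { sym := fun u v h => h.symm
        irr := fun u h => Γ.loopless.irrefl u h
        tot := fun u v h => (hmatch u v).mp h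
        sub := fun u v h => (hmatch u v).mpr (Or.inl h)
        asym := hasym
        qt := fun u z w h1 h2 hne => (hmatch u w).mpr (hqt u z w h1 h2 hne) }
    exact GH.key (Set.ncard {p : V × V | Γ.Adj p.1 p.2}) Γ.Adj A H le_rfl
  · rintro ⟨r, hpo, hm⟩
    refine ⟨fun u v => r u v ∧ u ≠ v, fun u h => h.2 rfl, ?_, ?_, ?_⟩
    · rintro u v ⟨h1, hne⟩ ⟨h2, _⟩
      exact hne (hpo.antisymm _ _ h1 h2)
    · intro u v
      by_cases hne : u = v
      · subst hne
        exact iff_of_false (Γ.loopless.irrefl u) (by rintro (⟨_, h⟩ | ⟨_, h⟩) <;> exact h rfl)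
      · rw [hm u v hne]
        constructor
        · rintro (h | h)
          · exact Or.inl ⟨h, hne⟩
          · exact Or.inr ⟨h, Ne.symm hne⟩
        · rintro (⟨h, _⟩ | ⟨h, _⟩)
          · exact Or.inl h
          · exact Or.inr h
    · rintro u z w ⟨h1, _⟩ ⟨h2, _⟩ hne
      exact Or.inl ⟨hpo.trans _ _ _ h1 h2, hne⟩
end

section
/- Let t ≥ 2 and let G be any orientation of tK2, the graph consisting of t pairwise disjoint edges (so G has 2t vertices and t pairwise non-incident arcs). Then for every finite simple graph Γ there exists a natural number k such that f(Γ,k) ≠ f_o(G,k); that is, no simple graph is chromatically equivalent to G. -/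
/-- The number of proper `k`-colourings of a simple graph. -/
noncomputable def chromCount {W : Type*} (Γ : SimpleGraph W) (k : ℕ) : ℕ :=
  Nat.card {c : W → Fin k // ∀ u v, Γ.Adj u v → c u ≠ c v}

set_option linter.unusedSectionVars false
set_option linter.unusedVariables false


lemma sub_pow_aux (a b : ℕ) : ∀ s : ℕ, a ^ s ≤ (a - b) ^ s + s * b * a ^ (s - 1)
  | 0 => by simp
  | (s+1) => by
    have IH := sub_pow_aux a b s
    have h1 : a ^ (s+1) ≤ a * (a-b)^s + s * b * (a * a^(s-1)) := by
      calc a^(s+1) = a * a^s := by ring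
      _ ≤ a * ((a-b)^s + s*b*a^(s-1)) := Nat.mul_le_mul_left a IH
      _ = a*(a-b)^s + s*b*(a*a^(s-1)) := by ring
    have h2 : s * b * (a * a^(s-1)) ≤ s * b * a ^ s := by
      cases s with
      | zero => simp
      | succ s' =>
        have : a * a ^ (s' + 1 - 1) = a ^ (s' + 1) := by
          simp [pow_succ, Nat.mul_comm]
        rw [this]
    have h3 : a * (a-b)^s ≤ (a-b)^(s+1) + b * a^s := by
      have hab : a ≤ (a-b) + b := by omega
      calc a * (a-b)^s ≤ ((a-b)+b) * (a-b)^s := Nat.mul_le_mul_right _ hab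
      _ = (a-b)^(s+1) + b*(a-b)^s := by ring
      _ ≤ (a-b)^(s+1) + b*a^s := by
          have h4 := Nat.pow_le_pow_left (Nat.sub_le a b) s
          exact Nat.add_le_add_left (Nat.mul_le_mul_left _ h4) _
    calc a ^ (s+1) ≤ a * (a-b)^s + s * b * (a * a^(s-1)) := h1
    _ ≤ ((a-b)^(s+1) + b * a^s) + s * b * a^s := Nat.add_le_add h3 h2
    _ = (a-b)^(s+1) + (s+1) * b * a ^ (s+1-1) := by simp only [Nat.add_sub_cancel]; ring




lemma keyPow (x y : ℕ) (hxy : x < y) :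
    ∃ k, y ≤ k ∧ k ^ x < (k + 1 - y) ^ y := by
  obtain ⟨z, rfl⟩ : ∃ z, y = z + 1 := ⟨y - 1, by omega⟩
  refine ⟨(z+1) * 2^(z+1) + (z+1), by nlinarith [Nat.one_le_two_pow (n := z+1)], ?_⟩
  have hbase : (z+1) * 2^(z+1) + (z+1) + 1 - (z+1) = (z+1) * 2^(z+1) + 1 := by omega
  rw [hbase]
  set k := (z+1) * 2^(z+1) + (z+1) with hk
  have hk1 : 1 ≤ k := by omega
  have step1 : k ^ x ≤ k ^ z := Nat.pow_le_pow_right hk1 (by omega)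
  have step2 : k ≤ (z+1) * 2^(z+2) := by
    have : 2^(z+1) + 1 ≤ 2^(z+2) := by
      have h0 := Nat.one_le_two_pow (n := z+1)
      have h1 : 2^(z+2) = 2^(z+1)*2 := pow_succ 2 (z+1)
      omega
    calc k = (z+1) * (2^(z+1) + 1) := by ring
    _ ≤ (z+1) * 2^(z+2) := Nat.mul_le_mul_left _ this
  have step3 : k ^ z ≤ (z+1)^z * 2^((z+2)*z) := by
    calc k ^ z ≤ ((z+1) * 2^(z+2)) ^ z := Nat.pow_le_pow_left step2 z
    _ = (z+1)^z * 2^((z+2)*z) := by rw [mul_pow, ← pow_mul]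
  have step4 : (z+1)^z * 2^((z+2)*z) < ((z+1) * 2^(z+1)) ^ (z+1) := by
    have he : ((z+1) * 2^(z+1)) ^ (z+1) = (z+1)^(z+1) * 2^((z+1)*(z+1)) := by
      rw [mul_pow, ← pow_mul]
    rw [he]
    have h1 : (z+1)^z ≤ (z+1)^(z+1) := Nat.pow_le_pow_right (by omega) (by omega)
    have h2 : 2^((z+2)*z) * 2 ≤ 2^((z+1)*(z+1)) := by
      rw [← pow_succ]
      exact Nat.pow_le_pow_right (by omega) (by nlinarith)
    have hp1 : 0 < (z+1)^z := by positivity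
    have hp2 : 0 < 2^((z+2)*z) := by positivity
    nlinarith
  have step5 : ((z+1) * 2^(z+1)) ^ (z+1) ≤ ((z+1) * 2^(z+1) + 1) ^ (z+1) :=
    Nat.pow_le_pow_left (by omega) _
  omega

section orient

variable {t : ℕ} (A : Fin t × Bool → Fin t × Bool → Prop)
    (hAanti : ∀ u v, A u v → ¬ A v u)
    (hU : ∀ u v, (A u v ∨ A v u) ↔ (u.1 = v.1 ∧ u.2 ≠ v.2))

include hAanti hU in
lemma notBoth : ∀ u x y, A x u → A u y → False := by
  intro u x y hxu huy
  have h1 := (hU x u).mp (Or.inl hxu)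
  have h2 := (hU u y).mp (Or.inl huy)
  have hxy : x = y := by
    have hb : x.2 = y.2 := by
      have := h1.2; have := h2.2
      revert this; revert ‹x.2 ≠ u.2›
      cases x.2 <;> cases u.2 <;> cases y.2 <;> simp
    exact Prod.ext (h1.1.trans h2.1) hb
  subst hxy
  exact hAanti x u hxu huy

include hU in
lemma harc : ∀ j : Fin t, ∃ b : Bool, A (j, b) (j, !b) := by
  intro j
  rcases (hU (j, false) (j, true)).mpr ⟨rfl, by simp⟩ with h | h
  · exact ⟨false, by simpa using h⟩
  · exact ⟨true, by simpa using h⟩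

include hAanti hU in
lemma foO_le_pow (k : ℕ) : foO A k ≤ k ^ (2 * t) := by
  have h1 : foO A k ≤ Nat.card (Fin t × Bool → Fin k) :=
    Nat.card_le_card_of_injective _ Subtype.val_injective
  rwa [Nat.card_fun, Nat.card_eq_fintype_card, Nat.card_eq_fintype_card,
    Fintype.card_fin, Fintype.card_prod, Fintype.card_fin, Fintype.card_bool,
    show t * 2 = 2 * t from Nat.mul_comm _ _] at h1

include hAanti hU in
lemma foO_ge_desc (k : ℕ) : Nat.descFactorial k (2 * t) ≤ foO A k := by
  classical
  have hmap : ∀ e : (Fin t × Bool) ↪ Fin k, OColoring A e := by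
    intro e
    constructor
    · intro u v huv heq
      have h := (hU u v).mp (Or.inl huv)
      have : u = v := e.injective heq
      exact h.2 (by rw [this])
    · intro u v x y huv hxy heq _
      have : u = y := e.injective heq
      subst this
      exact notBoth A hAanti hU u x v hxy huv
  have hinj : Function.Injective
      (fun e : (Fin t × Bool) ↪ Fin k => (⟨e, hmap e⟩ : {c // OColoring A c})) := by
    intro e1 e2 h
    have := congrArg Subtype.val h
    exact Function.Embedding.coe_injective this
  have := Nat.card_le_card_of_injective _ hinj
  rwa [Nat.card_eq_fintype_card, Fintype.card_embedding_eq, Fintype.card_fin,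
    Fintype.card_prod, Fintype.card_fin, Fintype.card_bool,
    show t * 2 = 2 * t from Nat.mul_comm _ _] at this

include hAanti hU in
lemma foO_one (htpos : 0 < t) : foO A 1 = 0 := by
  have : IsEmpty {c : Fin t × Bool → Fin 1 // OColoring A c} := by
    constructor
    rintro ⟨c, hc⟩
    obtain ⟨b, hb⟩ := harc A hU ⟨0, htpos⟩
    exact hc.1 _ _ hb (Subsingleton.elim _ _)
  simp [foO, Nat.card_eq_zero, this]

end orient

section two

variable {t : ℕ} (A : Fin t × Bool → Fin t × Bool → Prop)
    (hAanti : ∀ u v, A u v → ¬ A v u)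
    (hU : ∀ u v, (A u v ∨ A v u) ↔ (u.1 = v.1 ∧ u.2 ≠ v.2))

include hAanti hU in
lemma foO_two_ge (htpos : 0 < t) : 1 ≤ foO A 2 := by
  classical
  have hcol : OColoring A (fun v => if ∃ w, A v w then (0 : Fin 2) else 1) := by
    constructor
    · intro u v huv
      show (if ∃ w, A u w then (0 : Fin 2) else 1) ≠ (if ∃ w, A v w then (0 : Fin 2) else 1)
      rw [if_pos ⟨v, huv⟩, if_neg (fun h : ∃ w, A v w =>
        notBoth A hAanti hU v u h.choose huv h.choose_spec)]
      decide
    · intro u v x y huv hxy _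
      show (if ∃ w, A v w then (0 : Fin 2) else 1) ≠ (if ∃ w, A x w then (0 : Fin 2) else 1)
      rw [if_neg (fun h : ∃ w, A v w =>
        notBoth A hAanti hU v u h.choose huv h.choose_spec), if_pos ⟨y, hxy⟩]
      decide
  have hne : Nonempty {c : Fin t × Bool → Fin 2 // OColoring A c} := ⟨⟨_, hcol⟩⟩
  exact Nat.one_le_iff_ne_zero.mpr (Nat.card_ne_zero.mpr ⟨hne, inferInstance⟩)

lemma fin2_aux : ∀ a b c : Fin 2, a ≠ b → c ≠ b → a = c := by decide

include hAanti hU in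
lemma tails_eq (c : Fin t × Bool → Fin 2) (hc : OColoring A c) :
    ∀ u v x y, A u v → A x y → c u = c x := by
  intro u v x y huv hxy
  by_contra hne
  have h1 : c u ≠ c v := hc.1 u v huv
  have h2 : c x ≠ c y := hc.1 x y hxy
  have huy : c u = c y := fin2_aux _ _ _ hne (Ne.symm h2)
  have hvx : c v = c x := fin2_aux _ _ _ (Ne.symm h1) (Ne.symm hne)
  exact hc.2 u v x y huv hxy huy hvx

include hAanti hU in
lemma foO_two_le (htpos : 0 < t) : foO A 2 ≤ 2 := by
  classical
  set j0 : Fin t := ⟨0, htpos⟩ with hj0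
  have hinj : Function.Injective
      (fun c : {c : Fin t × Bool → Fin 2 // OColoring A c} => c.1 (j0, false)) := by
    intro c c' h
    have h' : c.1 (j0, false) = c'.1 (j0, false) := h
    obtain ⟨b0, hb0⟩ := harc A hU j0
    have h1 : c.1 (j0, b0) ≠ c.1 (j0, !b0) := c.2.1 _ _ hb0
    have h1' : c'.1 (j0, b0) ≠ c'.1 (j0, !b0) := c'.2.1 _ _ hb0
    have key : c.1 (j0, b0) = c'.1 (j0, b0) := by
      cases b0 with
      | false => exact h'
      | true =>
        refine fin2_aux _ (c.1 (j0, !true)) _ h1 ?_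
        have hf : c.1 (j0, !true) = c'.1 (j0, !true) := h'
        rw [hf]
        exact h1'
    apply Subtype.ext
    funext w
    obtain ⟨j, b⟩ := w
    obtain ⟨bj, hbj⟩ := harc A hU j
    have ht1 : c.1 (j, bj) = c'.1 (j, bj) := by
      calc c.1 (j, bj) = c.1 (j0, b0) := tails_eq A hAanti hU c.1 c.2 _ _ _ _ hbj hb0
      _ = c'.1 (j0, b0) := key
      _ = c'.1 (j, bj) := (tails_eq A hAanti hU c'.1 c'.2 _ _ _ _ hbj hb0).symm
    have ht2 : c.1 (j, !bj) = c'.1 (j, !bj) := by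
      have g1 : c.1 (j, bj) ≠ c.1 (j, !bj) := c.2.1 _ _ hbj
      have g2 : c'.1 (j, bj) ≠ c'.1 (j, !bj) := c'.2.1 _ _ hbj
      refine fin2_aux _ (c.1 (j, bj)) _ (Ne.symm g1) ?_
      rw [ht1]
      exact Ne.symm g2
    have hbb : b = bj ∨ b = !bj := by cases b <;> cases bj <;> simp
    rcases hbb with rfl | rfl
    · exact ht1
    · exact ht2
  have hcard := Nat.card_le_card_of_injective _ hinj
  have : Nat.card (Fin 2) = 2 := by simp
  rw [this] at hcard
  unfold foO
  exact hcard

end two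

section pairlower

variable {t : ℕ} (A : Fin t × Bool → Fin t × Bool → Prop)
    (hAanti : ∀ u v, A u v → ¬ A v u)
    (hU : ∀ u v, (A u v ∨ A v u) ↔ (u.1 = v.1 ∧ u.2 ≠ v.2))

include hAanti hU in
lemma foO_pair_lower (k : ℕ) : (Nat.choose k 2).descFactorial t * 2 ^ t ≤ foO A k := by
  classical
  have hSne : ∀ s : {s : Finset (Fin k) // s.card = 2}, s.1.Nonempty :=
    fun s => Finset.card_pos.mp (by rw [s.2]; omega)
  set S := {s : Finset (Fin k) // s.card = 2} with hS
  set lo : (Fin t ↪ S) → Fin t → Fin k := fun g j => (g j).1.min' (hSne (g j)) with hlo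
  set hi : (Fin t ↪ S) → Fin t → Fin k := fun g j => (g j).1.max' (hSne (g j)) with hhi
  have hlt : ∀ g j, lo g j < hi g j :=
    fun g j => Finset.min'_lt_max'_of_card _ (by rw [(g j).2]; omega)
  have hlomem : ∀ g j, lo g j ∈ (g j).1 := fun g j => Finset.min'_mem _ _
  have hhimem : ∀ g j, hi g j ∈ (g j).1 := fun g j => Finset.max'_mem _ _
  set cdef : ((Fin t ↪ S) × (Fin t → Bool)) → (Fin t × Bool → Fin k) := fun p v =>
    if ∃ w, A v w then (if p.2 v.1 then hi p.1 v.1 else lo p.1 v.1)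
    else (if p.2 v.1 then lo p.1 v.1 else hi p.1 v.1) with hcdef
  have cmem : ∀ p v, cdef p v ∈ (p.1 v.1).1 := by
    intro p v
    rw [hcdef]
    dsimp only
    split <;> split
    exacts [hhimem _ _, hlomem _ _, hlomem _ _, hhimem _ _]
  have tail_val : ∀ p (u v : Fin t × Bool), A u v →
      cdef p u = (if p.2 u.1 then hi p.1 u.1 else lo p.1 u.1) := by
    intro p u v huv
    rw [hcdef]
    dsimp only
    rw [if_pos ⟨v, huv⟩]
  have head_val : ∀ p (u v : Fin t × Bool), A u v →
      cdef p v = (if p.2 v.1 then lo p.1 v.1 else hi p.1 v.1) := by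
    intro p u v huv
    rw [hcdef]
    dsimp only
    rw [if_neg (fun h : ∃ w, A v w =>
      notBoth A hAanti hU v u h.choose huv h.choose_spec)]
  have arc_ne : ∀ p (u v : Fin t × Bool), A u v → cdef p u ≠ cdef p v := by
    intro p u v huv
    have hj : u.1 = v.1 := ((hU u v).mp (Or.inl huv)).1
    rw [tail_val p u v huv, head_val p u v huv, ← hj]
    split_ifs with hb
    · exact (hlt p.1 u.1).ne'
    · exact (hlt p.1 u.1).ne
  have hocol : ∀ p, OColoring A (cdef p) := by
    intro p
    refine ⟨arc_ne p, ?_⟩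
    intro u v x y huv hxy hc hvx
    have hju : u.1 = v.1 := ((hU u v).mp (Or.inl huv)).1
    have hjx : x.1 = y.1 := ((hU x y).mp (Or.inl hxy)).1
    have hset1 : ({cdef p u, cdef p v} : Finset (Fin k)) = (p.1 u.1).1 := by
      apply Finset.eq_of_subset_of_card_le
      · intro a ha
        rcases Finset.mem_insert.mp ha with rfl | ha
        · exact cmem p u
        · rw [Finset.mem_singleton.mp ha]
          have h := cmem p v
          rwa [← hju] at h
      · rw [(p.1 u.1).2, Finset.card_pair (arc_ne p u v huv)]
    have hset2 : ({cdef p x, cdef p y} : Finset (Fin k)) = (p.1 x.1).1 := by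
      apply Finset.eq_of_subset_of_card_le
      · intro a ha
        rcases Finset.mem_insert.mp ha with rfl | ha
        · exact cmem p x
        · rw [Finset.mem_singleton.mp ha]
          have h := cmem p y
          rwa [← hjx] at h
      · rw [(p.1 x.1).2, Finset.card_pair (arc_ne p x y hxy)]
    have hset3 : ({cdef p u, cdef p v} : Finset (Fin k)) = {cdef p x, cdef p y} := by
      rw [hc, hvx, Finset.pair_comm]
    have hgj : p.1 u.1 = p.1 x.1 := Subtype.ext (by rw [← hset1, ← hset2, hset3])
    have hjux : u.1 = x.1 := p.1.injective hgj
    have h1 : cdef p u = (if p.2 u.1 then hi p.1 u.1 else lo p.1 u.1) := tail_val p u v huv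
    have h2 : cdef p y = (if p.2 y.1 then lo p.1 y.1 else hi p.1 y.1) := head_val p x y hxy
    rw [h1, h2, ← hjx, ← hjux] at hc
    revert hc
    split_ifs with hb
    · exact (hlt p.1 u.1).ne'
    · exact (hlt p.1 u.1).ne
  have recov : ∀ p j, (p.1 j).1 = {cdef p (j, false), cdef p (j, true)} := by
    intro p j
    obtain ⟨b, hb⟩ := harc A hU j
    symm
    apply Finset.eq_of_subset_of_card_le
    · intro a ha
      rcases Finset.mem_insert.mp ha with rfl | ha
      · exact cmem p (j, false)
      · rw [Finset.mem_singleton.mp ha]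
        exact cmem p (j, true)
    · rw [(p.1 j).2]
      have hne2 : cdef p (j, false) ≠ cdef p (j, true) := by
        cases b with
        | false => exact arc_ne p _ _ hb
        | true => exact (arc_ne p _ _ hb).symm
      rw [Finset.card_pair hne2]
  have hinj : Function.Injective (fun p : (Fin t ↪ S) × (Fin t → Bool) =>
      (⟨cdef p, hocol p⟩ : {c : Fin t × Bool → Fin k // OColoring A c})) := by
    intro p q hpq
    have hcc : cdef p = cdef q := congrArg Subtype.val hpq
    obtain ⟨g, ε⟩ := p
    obtain ⟨g', ε'⟩ := q
    have hg : g = g' := by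
      apply DFunLike.ext
      intro j
      apply Subtype.ext
      have r1 := recov (g, ε) j
      have r2 := recov (g', ε') j
      dsimp only at r1 r2
      rw [r1, r2, hcc]
    subst hg
    have hε : ε = ε' := by
      funext j
      obtain ⟨b, hb⟩ := harc A hU j
      have h1 := tail_val (g, ε) (j, b) (j, !b) hb
      have h2 := tail_val (g, ε') (j, b) (j, !b) hb
      rw [hcc] at h1
      have heq : (if ε j then hi g j else lo g j) = (if ε' j then hi g j else lo g j) :=
        h1.symm.trans h2
      cases hej : ε j <;> cases hej' : ε' j <;> rw [hej, hej'] at heq <;>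
        simp only [if_true, if_false, Bool.false_eq_true, Bool.true_eq_false,
          ite_true, ite_false] at heq
      · exact absurd heq (hlt g j).ne
      · exact absurd heq (hlt g j).ne'
    rw [hε]
  have hcard := Nat.card_le_card_of_injective _ hinj
  have hD : Nat.card ((Fin t ↪ S) × (Fin t → Bool))
      = (Nat.choose k 2).descFactorial t * 2 ^ t := by
    rw [Nat.card_eq_fintype_card, Fintype.card_prod, Fintype.card_embedding_eq,
      Fintype.card_fun]
    simp [hS, Fintype.card_finset_len]
  rw [hD] at hcard
  unfold foO
  exact hcard

end pairlower

section chrom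

variable {W : Type} [Fintype W] (Γ : SimpleGraph W)

lemma chrom_le_pow (k : ℕ) : chromCount Γ k ≤ k ^ (Fintype.card W) := by
  have h1 : chromCount Γ k ≤ Nat.card (W → Fin k) :=
    Nat.card_le_card_of_injective _ Subtype.val_injective
  rwa [Nat.card_fun, Nat.card_eq_fintype_card, Nat.card_eq_fintype_card,
    Fintype.card_fin] at h1

lemma chrom_ge_desc (k : ℕ) : Nat.descFactorial k (Fintype.card W) ≤ chromCount Γ k := by
  classical
  have hinj : Function.Injective (fun e : W ↪ Fin k =>
      (⟨e, fun u v huv heq => huv.ne (e.injective heq)⟩ :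
        {c : W → Fin k // ∀ u v, Γ.Adj u v → c u ≠ c v})) := by
    intro e1 e2 h
    exact Function.Embedding.coe_injective (congrArg Subtype.val h)
  have h := Nat.card_le_card_of_injective _ hinj
  rwa [Nat.card_eq_fintype_card, Fintype.card_embedding_eq, Fintype.card_fin] at h

lemma chrom_one_pos (hno : ∀ u v, ¬ Γ.Adj u v) : 0 < chromCount Γ 1 := by
  have hne : Nonempty {c : W → Fin 1 // ∀ u v, Γ.Adj u v → c u ≠ c v} :=
    ⟨⟨fun _ => 0, fun u v huv => absurd huv (hno u v)⟩⟩
  exact Nat.card_pos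

lemma four_le_chrom {a b : W} (hnr : ¬ Γ.Reachable a b)
    (c : W → Fin 2) (hc : ∀ u v, Γ.Adj u v → c u ≠ c v) : 4 ≤ chromCount Γ 2 := by
  classical
  set o : Fin 2 × Fin 2 → W → Fin 2 := fun p w =>
    (if Γ.Reachable a w then p.1 else 0) + (if Γ.Reachable b w then p.2 else 0) with ho
  have hprop : ∀ p : Fin 2 × Fin 2, ∀ u v, Γ.Adj u v →
      (c u + o p u) ≠ (c v + o p v) := by
    intro p u v huv
    have hra : Γ.Reachable a u ↔ Γ.Reachable a v :=
      ⟨fun h => h.trans huv.reachable, fun h => h.trans huv.symm.reachable⟩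
    have hrb : Γ.Reachable b u ↔ Γ.Reachable b v :=
      ⟨fun h => h.trans huv.reachable, fun h => h.trans huv.symm.reachable⟩
    have houv : o p u = o p v := by rw [ho]; simp only [hra, hrb]
    rw [houv]
    intro heq
    exact hc u v huv (add_right_cancel heq)
  have hoa : ∀ p : Fin 2 × Fin 2, o p a = p.1 := by
    intro p
    rw [ho]
    dsimp only
    rw [if_pos (SimpleGraph.Reachable.refl (G := Γ) a),
      if_neg (fun h : Γ.Reachable b a => hnr h.symm), add_zero]
  have hob : ∀ p : Fin 2 × Fin 2, o p b = p.2 := by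
    intro p
    rw [ho]
    dsimp only
    rw [if_pos (SimpleGraph.Reachable.refl (G := Γ) b), if_neg hnr, zero_add]
  have hinj : Function.Injective (fun p : Fin 2 × Fin 2 =>
      (⟨fun w => c w + o p w, hprop p⟩ :
        {c : W → Fin 2 // ∀ u v, Γ.Adj u v → c u ≠ c v})) := by
    intro p q h
    have hfun := congrArg Subtype.val h
    have ha := congrFun hfun a
    have hb := congrFun hfun b
    simp only at ha hb
    rw [hoa p, hoa q] at ha
    rw [hob p, hob q] at hb
    exact Prod.ext (add_left_cancel ha) (add_left_cancel hb)
  have h := Nat.card_le_card_of_injective _ hinj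
  rwa [Nat.card_eq_fintype_card, Fintype.card_prod, Fintype.card_fin] at h

lemma conn_card_le [Fintype Γ.edgeSet] (hconn : Γ.Connected) :
    Fintype.card W ≤ Γ.edgeFinset.card + 1 := by
  classical
  have hW : Nonempty W := hconn.nonempty
  obtain ⟨r⟩ := hW
  have step : ∀ v : W, v ≠ r → ∃ w, Γ.Adj v w ∧ Γ.dist w r < Γ.dist v r := by
    intro v hv
    obtain ⟨p, hp⟩ := (hconn v r).exists_walk_length_eq_dist
    cases p with
    | nil => exact absurd rfl hv
    | @cons _ w _ h q =>
      refine ⟨w, h, ?_⟩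
      have h1 := Γ.dist_le q
      rw [SimpleGraph.Walk.length_cons] at hp
      omega
  choose nxt hadj hdist using step
  have hinj : Function.Injective (fun v : {v : W // v ≠ r} =>
      (⟨s(v.1, nxt v.1 v.2), (Γ.mem_edgeSet).mpr (hadj v.1 v.2)⟩ : Γ.edgeSet)) := by
    intro v v' h
    have h' : s(v.1, nxt v.1 v.2) = s(v'.1, nxt v'.1 v'.2) := congrArg Subtype.val h
    rw [Sym2.eq_iff] at h'
    rcases h' with ⟨h1, _⟩ | ⟨h1, h2⟩
    · exact Subtype.ext h1
    · exfalso
      have d1 := hdist v.1 v.2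
      have d2 := hdist v'.1 v'.2
      rw [h2] at d1
      rw [← h1] at d2
      omega
  have h := Nat.card_le_card_of_injective _ hinj
  rw [Nat.card_eq_fintype_card (α := {v : W // v ≠ r}), Nat.card_eq_fintype_card,
    ← SimpleGraph.edgeFinset_card] at h
  have hcompl : Fintype.card {v : W // v ≠ r} = Fintype.card W - 1 := by
    have := Fintype.card_subtype_compl (fun v : W => v = r)
    rw [Fintype.card_subtype_eq] at this
    exact this
  rw [hcompl] at h
  have : 0 < Fintype.card W := Fintype.card_pos_iff.mpr ⟨r⟩
  omega

end chrom

section bonf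

open Finset in
lemma bonferroni {ι α : Type*} [DecidableEq ι] [DecidableEq α] (F : ι → Finset α)
    (s : Finset ι) :
    (∑ i ∈ s, (F i).card) ≤
      (s.biUnion F).card + ∑ i ∈ s, ∑ j ∈ s.erase i, (F i ∩ F j).card := by
  induction s using Finset.induction_on with
  | empty => simp
  | @insert a s ha ih =>
    rw [Finset.sum_insert ha]
    have key1 : (F a).card + (s.biUnion F).card
        = ((insert a s).biUnion F).card + (F a ∩ s.biUnion F).card := by
      rw [Finset.biUnion_insert, Finset.card_union_add_card_inter]
    have key2 : (F a ∩ s.biUnion F).card ≤ ∑ j ∈ s, (F a ∩ F j).card := by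
      rw [Finset.inter_biUnion]
      exact Finset.card_biUnion_le
    have key3 : (∑ j ∈ s, (F a ∩ F j).card) + ∑ i ∈ s, ∑ j ∈ s.erase i, (F i ∩ F j).card
        ≤ ∑ i ∈ insert a s, ∑ j ∈ (insert a s).erase i, (F i ∩ F j).card := by
      rw [Finset.sum_insert ha, Finset.erase_insert ha]
      refine Nat.add_le_add_left (Finset.sum_le_sum fun i hi => ?_) _
      have hia : i ≠ a := fun h => ha (h ▸ hi)
      rw [Finset.erase_insert_of_ne (Ne.symm hia),
        Finset.sum_insert (fun h => ha (Finset.mem_of_mem_erase h))]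
      exact Nat.le_add_left _ _
    calc (F a).card + ∑ i ∈ s, (F i).card
        ≤ (F a).card + ((s.biUnion F).card + ∑ i ∈ s, ∑ j ∈ s.erase i, (F i ∩ F j).card) :=
          Nat.add_le_add_left ih _
      _ = ((F a).card + (s.biUnion F).card) + ∑ i ∈ s, ∑ j ∈ s.erase i, (F i ∩ F j).card := by
          ring
      _ = (((insert a s).biUnion F).card + (F a ∩ s.biUnion F).card) + _ := by rw [key1]
      _ ≤ ((insert a s).biUnion F).card
            + ((∑ j ∈ s, (F a ∩ F j).card) + ∑ i ∈ s, ∑ j ∈ s.erase i, (F i ∩ F j).card) := by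
          have := Nat.add_le_add_right key2 (∑ i ∈ s, ∑ j ∈ s.erase i, (F i ∩ F j).card)
          omega
      _ ≤ _ := Nat.add_le_add_left key3 _

lemma filter_eq_card_ge {W : Type} [Fintype W] [DecidableEq W] (k : ℕ) (x y : W)
    (hxy : x ≠ y) :
    k ^ (Fintype.card W - 1) ≤ (Finset.univ.filter (fun f : W → Fin k => f x = f y)).card := by
  classical
  set φ : ({w : W // w ≠ y} → Fin k) → (W → Fin k) := fun f w =>
    if h : w = y then f ⟨x, hxy⟩ else f ⟨w, h⟩ with hφ
  have hmem : ∀ f, φ f ∈ Finset.univ.filter (fun f : W → Fin k => f x = f y) := by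
    intro f
    rw [Finset.mem_filter]
    refine ⟨Finset.mem_univ _, ?_⟩
    rw [hφ]
    dsimp only
    rw [dif_neg hxy, dif_pos rfl]
  have hinj : Set.InjOn φ ↑(Finset.univ : Finset ({w : W // w ≠ y} → Fin k)) := by
    intro f _ g _ h
    funext w
    have h2 := congrFun h w.1
    rw [hφ] at h2
    dsimp only at h2
    rw [dif_neg w.2, dif_neg w.2] at h2
    exact h2
  have hcard := Finset.card_le_card_of_injOn φ (fun f _ => hmem f) hinj
  have hsub : Fintype.card {w : W // w ≠ y} = Fintype.card W - 1 := by
    have h3 := Fintype.card_subtype_compl (fun w : W => w = y)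
    rw [Fintype.card_subtype_eq] at h3
    exact h3
  rwa [Finset.card_univ, Fintype.card_fun, Fintype.card_fin, hsub] at hcard

lemma filter_two_card_le {W : Type} [Fintype W] [DecidableEq W] (k : ℕ)
    (x y x' y' : W) (hxy : x ≠ y) (hx'y' : x' ≠ y') (hss : s(x, y) ≠ s(x', y')) :
    ((Finset.univ.filter (fun f : W → Fin k => f x = f y)) ∩
     (Finset.univ.filter (fun f : W → Fin k => f x' = f y'))).card
      ≤ k ^ (Fintype.card W - 2) := by
  classical
  have hb : ∃ b p, ((b = x' ∧ p = y') ∨ (b = y' ∧ p = x')) ∧ b ≠ x ∧ b ≠ y := by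
    by_cases h1 : x' ≠ x ∧ x' ≠ y
    · exact ⟨x', y', Or.inl ⟨rfl, rfl⟩, h1⟩
    by_cases h2 : y' ≠ x ∧ y' ≠ y
    · exact ⟨y', x', Or.inr ⟨rfl, rfl⟩, h2⟩
    exfalso
    push_neg at h1 h2
    apply hss
    rcases eq_or_ne x' x with hx | hx
    · rcases eq_or_ne y' x with hy | hy
      · exact absurd (hx.trans hy.symm) hx'y'
      · rw [Sym2.eq_iff]
        exact Or.inl ⟨hx.symm, (h2 hy).symm⟩
    · rcases eq_or_ne y' x with hy | hy
      · rw [Sym2.eq_iff]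
        exact Or.inr ⟨hy.symm, (h1 hx).symm⟩
      · exact absurd ((h1 hx).trans (h2 hy).symm) hx'y'
  obtain ⟨b, p, hbp, hbx, hby⟩ := hb
  have hpb : p ≠ b := by
    rcases hbp with ⟨rfl, rfl⟩ | ⟨rfl, rfl⟩
    · exact Ne.symm hx'y'
    · exact hx'y'
  set ψ : (W → Fin k) → ({w : W // w ≠ y ∧ w ≠ b} → Fin k) := fun f w => f w.1 with hψ
  have hinj : Set.InjOn ψ ↑((Finset.univ.filter (fun f : W → Fin k => f x = f y)) ∩
     (Finset.univ.filter (fun f : W → Fin k => f x' = f y'))) := by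
    intro f hf g hg h
    simp only [Finset.coe_inter, Set.mem_inter_iff, Finset.mem_coe, Finset.mem_filter] at hf hg
    have hf1 : f x = f y := hf.1.2
    have hg1 : g x = g y := hg.1.2
    have hfb : f b = f p := by
      rcases hbp with ⟨rfl, rfl⟩ | ⟨rfl, rfl⟩
      · exact hf.2.2
      · exact hf.2.2.symm
    have hgb : g b = g p := by
      rcases hbp with ⟨rfl, rfl⟩ | ⟨rfl, rfl⟩
      · exact hg.2.2
      · exact hg.2.2.symm
    have hoff : ∀ w, w ≠ y → w ≠ b → f w = g w := fun w h1 h2 => congrFun h ⟨w, h1, h2⟩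
    have hfy : f y = g y := by
      rw [← hf1, ← hg1]
      exact hoff x hxy (Ne.symm hbx)
    have hall : ∀ w, w ≠ b → f w = g w := by
      intro w hw
      by_cases hwy : w = y
      · rw [hwy]; exact hfy
      · exact hoff w hwy hw
    funext w
    by_cases hwb : w = b
    · rw [hwb, hfb, hgb]
      exact hall p hpb
    · exact hall w hwb
  have hcard := Finset.card_le_card_of_injOn ψ (fun f _ => Finset.mem_univ _) hinj
  have hsub : Fintype.card {w : W // w ≠ y ∧ w ≠ b} = Fintype.card W - 2 := by
    rw [Fintype.card_subtype]
    have hflt : (Finset.univ.filter (fun w : W => w ≠ y ∧ w ≠ b))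
        = Finset.univ \ {y, b} := by
      ext w
      simp [not_or]
    rw [hflt, Finset.card_sdiff_of_subset (Finset.subset_univ _), Finset.card_univ,
      Finset.card_pair (Ne.symm hby)]
  rwa [Finset.card_univ, Fintype.card_fun, Fintype.card_fin, hsub] at hcard

end bonf

open Finset in
lemma chrom_upper {W : Type} [Fintype W] (Γ : SimpleGraph W) [Fintype Γ.edgeSet]
    (k q : ℕ) (hq : q ≤ Γ.edgeFinset.card) :
    chromCount Γ k + q * k ^ (Fintype.card W - 1)
      ≤ k ^ (Fintype.card W) + q * (q * k ^ (Fintype.card W - 2)) := by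
  classical
  set n := Fintype.card W with hn
  obtain ⟨Es, hEsub, hEcard⟩ := Finset.exists_subset_card_eq hq
  have hrep : ∀ e : Sym2 W, ∃ pr : W × W, e = s(pr.1, pr.2) := by
    intro e
    induction e using Sym2.ind with
    | _ x y => exact ⟨(x, y), rfl⟩
  choose ep hep using hrep
  set Bad : Sym2 W → Finset (W → Fin k) :=
    fun e => Finset.univ.filter (fun f => f (ep e).1 = f (ep e).2) with hBad
  have hadj : ∀ e ∈ Es, Γ.Adj (ep e).1 (ep e).2 := by
    intro e he
    have h1 : e ∈ Γ.edgeSet := SimpleGraph.mem_edgeFinset.mp (hEsub he)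
    rw [hep e] at h1
    exact (Γ.mem_edgeSet).mp h1
  have hchrom_card : chromCount Γ k
      = (Finset.univ.filter (fun c : W → Fin k => ∀ u v, Γ.Adj u v → c u ≠ c v)).card := by
    unfold chromCount
    rw [Nat.card_eq_fintype_card, Fintype.card_subtype]
  have hsubset : (Finset.univ.filter (fun c : W → Fin k => ∀ u v, Γ.Adj u v → c u ≠ c v))
      ⊆ Finset.univ \ Es.biUnion Bad := by
    intro f hf
    rw [Finset.mem_filter] at hf
    rw [Finset.mem_sdiff]
    refine ⟨Finset.mem_univ _, ?_⟩
    intro hmem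
    obtain ⟨e, he, hfe⟩ := Finset.mem_biUnion.mp hmem
    rw [hBad] at hfe
    exact hf.2 _ _ (hadj e he) (Finset.mem_filter.mp hfe).2
  have hA : chromCount Γ k + (Es.biUnion Bad).card ≤ k ^ n := by
    have h1 := Finset.card_le_card hsubset
    have h2 := Finset.card_sdiff_add_card_eq_card (Finset.subset_univ (Es.biUnion Bad))
    have h3 : (Finset.univ : Finset (W → Fin k)).card = k ^ n := by
      rw [Finset.card_univ, Fintype.card_fun, Fintype.card_fin, hn]
    rw [hchrom_card]
    calc (Finset.univ.filter (fun c : W → Fin k => ∀ u v, Γ.Adj u v → c u ≠ c v)).card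
          + (Es.biUnion Bad).card
        ≤ (Finset.univ \ Es.biUnion Bad).card + (Es.biUnion Bad).card :=
          Nat.add_le_add_right h1 _
      _ = (Finset.univ : Finset (W → Fin k)).card := h2
      _ = k ^ n := h3
  have hB : q * k ^ (n - 1) ≤ ∑ e ∈ Es, (Bad e).card := by
    have h1 : ∀ e ∈ Es, k ^ (n - 1) ≤ (Bad e).card :=
      fun e he => filter_eq_card_ge k _ _ (hadj e he).ne
    calc q * k ^ (n-1) = Es.card • k ^ (n-1) := by rw [hEcard, smul_eq_mul]
    _ ≤ ∑ e ∈ Es, (Bad e).card := Finset.card_nsmul_le_sum Es _ _ h1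
  have hC : ∑ e ∈ Es, ∑ e' ∈ Es.erase e, ((Bad e) ∩ (Bad e')).card
      ≤ q * (q * k ^ (n - 2)) := by
    have h1 : ∀ e ∈ Es, ∑ e' ∈ Es.erase e, ((Bad e) ∩ (Bad e')).card ≤ q * k ^ (n-2) := by
      intro e he
      have h2 : ∀ e' ∈ Es.erase e, ((Bad e) ∩ (Bad e')).card ≤ k ^ (n-2) := by
        intro e' he'
        have hne : e ≠ e' := (Finset.ne_of_mem_erase he').symm
        have hadj1 := hadj e he
        have hadj2 := hadj e' (Finset.mem_of_mem_erase he')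
        refine filter_two_card_le k _ _ _ _ hadj1.ne hadj2.ne ?_
        rw [← hep e, ← hep e']
        exact hne
      calc ∑ e' ∈ Es.erase e, ((Bad e) ∩ (Bad e')).card
          ≤ (Es.erase e).card • k ^ (n-2) := Finset.sum_le_card_nsmul _ _ _ h2
      _ ≤ q * k ^ (n-2) := by
          rw [smul_eq_mul]
          exact Nat.mul_le_mul_right _ (le_trans Finset.card_erase_le (le_of_eq hEcard))
    calc ∑ e ∈ Es, ∑ e' ∈ Es.erase e, ((Bad e) ∩ (Bad e')).card
        ≤ Es.card • (q * k ^ (n-2)) := Finset.sum_le_card_nsmul _ _ _ h1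
    _ = q * (q * k ^ (n-2)) := by rw [hEcard, smul_eq_mul]
  have hbon := bonferroni Bad Es
  calc chromCount Γ k + q * k ^ (n-1)
      ≤ chromCount Γ k + ∑ e ∈ Es, (Bad e).card := Nat.add_le_add_left hB _
    _ ≤ chromCount Γ k + ((Es.biUnion Bad).card
          + ∑ e ∈ Es, ∑ e' ∈ Es.erase e, ((Bad e) ∩ (Bad e')).card) := Nat.add_le_add_left hbon _
    _ = (chromCount Γ k + (Es.biUnion Bad).card)
          + ∑ e ∈ Es, ∑ e' ∈ Es.erase e, ((Bad e) ∩ (Bad e')).card := by ring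
    _ ≤ k ^ n + q * (q * k ^ (n-2)) := Nat.add_le_add hA hC


/-- `G` (given by arc relation `A` on the vertices `Fin t × Bool`, the vertex `(j, false)`
playing the role of `u_j` and `(j, true)` that of `v_j`) is an orientation of `tK₂`:
its underlying adjacencies are exactly the pairs `{(j, false), (j, true)}`. -/
theorem stmt_11 (t : ℕ) (ht : 2 ≤ t)
    (A : Fin t × Bool → Fin t × Bool → Prop)
    (hAirr : ∀ u, ¬ A u u) (hAanti : ∀ u v, A u v → ¬ A v u)
    (hU : ∀ u v, (A u v ∨ A v u) ↔ (u.1 = v.1 ∧ u.2 ≠ v.2)) :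
    ∀ (W : Type) [Fintype W] (Γ : SimpleGraph W),
      ∃ k : ℕ, chromCount Γ k ≠ foO A k := by
  intro W _ Γ
  by_contra hcon
  push_neg at hcon
  classical
  letI : Fintype Γ.edgeSet := Set.Finite.fintype (Set.toFinite _)
  set n := Fintype.card W with hn
  set m := Γ.edgeFinset.card with hm
  have htpos : 0 < t := by omega
  have hedge : ∃ u v, Γ.Adj u v := by
    by_contra hno
    push_neg at hno
    have h0 := chrom_one_pos Γ hno
    rw [hcon 1, foO_one A hAanti hU htpos] at h0
    exact Nat.lt_irrefl 0 h0
  rcases lt_trichotomy n (2*t) with hlt | heq | hgt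
  · -- n < 2t
    obtain ⟨k, hk1, hk2⟩ := keyPow n (2*t) hlt
    have c1 : foO A k ≤ k ^ n := by
      rw [← hcon k]
      exact chrom_le_pow Γ k
    have c2 : (k + 1 - 2*t) ^ (2*t) ≤ foO A k :=
      le_trans (Nat.pow_sub_le_descFactorial k (2*t)) (foO_ge_desc A hAanti hU k)
    omega
  · -- n = 2t
    rcases le_or_gt m t with hmle | hmgt
    · -- m ≤ t : Γ must be connected, contradiction with edge count
      have hfo2ge := foO_two_ge A hAanti hU htpos
      have hfo2le := foO_two_le A hAanti hU htpos
      have hch2 : chromCount Γ 2 = foO A 2 := hcon 2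
      have hpos : 0 < chromCount Γ 2 := by omega
      have hnem : Nonempty {c : W → Fin 2 // ∀ u v, Γ.Adj u v → c u ≠ c v} := by
        by_contra hemp
        rw [not_nonempty_iff] at hemp
        have hz : chromCount Γ 2 = 0 := by
          unfold chromCount
          simp [Nat.card_eq_zero]
        omega
      obtain ⟨c, hc⟩ := hnem
      have hpre : Γ.Preconnected := by
        intro a b
        by_contra hnr
        have h4 := four_le_chrom Γ hnr c hc
        omega
      have hWne : Nonempty W := by
        obtain ⟨u, v, h⟩ := hedge
        exact ⟨u⟩
      have hconn : Γ.Connected := (Γ.connected_iff).mpr ⟨hpre, hWne⟩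
      have hcc := conn_card_le Γ hconn
      omega
    · -- m ≥ t + 1
      set C := 2*t*t + (t+1)*(t+1) with hC
      set k := C + 1 with hk
      have hkpos : 0 < k := by omega
      -- upper bound for chromCount
      have hup := chrom_upper Γ k (t+1) (by omega)
      rw [← hn, heq] at hup
      -- lower bound for foO
      have h2c : 2 * Nat.choose k 2 = k * (k-1) := by
        have hev : Even (k * (k-1)) := by
          rcases Nat.even_or_odd k with he | ho
          · exact he.mul_right _
          · exact (Nat.Odd.sub_odd ho odd_one).mul_left _
        rw [Nat.choose_two_right]
        exact Nat.mul_div_cancel' hev.two_dvd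
      have hkk : k * (k-1) = k^2 - k := by
        rw [Nat.mul_sub, mul_one, ← pow_two]
      have hbase : k^2 - k - 2*t ≤ 2 * ((Nat.choose k 2) + 1 - t) := by
        rw [← hkk]
        omega
      have hfoO_low : (k^2 - k - 2*t)^t ≤ foO A k := by
        calc (k^2 - k - 2*t)^t ≤ (2 * ((Nat.choose k 2) + 1 - t))^t :=
              Nat.pow_le_pow_left hbase t
        _ = (Nat.choose k 2 + 1 - t)^t * 2^t := by rw [mul_pow]; ring
        _ ≤ (Nat.choose k 2).descFactorial t * 2^t :=
              Nat.mul_le_mul_right _ (Nat.pow_sub_le_descFactorial _ _)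
        _ ≤ foO A k := foO_pair_lower A hAanti hU k
      have hchrom_low : (k^2 - k - 2*t)^t ≤ chromCount Γ k := by
        rw [hcon k]
        exact hfoO_low
      -- power expansion facts
      have e1 : (k^2)^(t-1) = k^(2*t-2) := by
        rw [← pow_mul]
        congr 1
        omega
      have e2 : k * k^(2*t-2) = k^(2*t-1) := by
        rw [show 2*t-1 = (2*t-2)+1 by omega, pow_succ]
        ring
      have hsp1 : k^(2*t) ≤ (k^2 - k)^t + t * k^(2*t-1) := by
        have h := sub_pow_aux (k^2) k t
        rw [pow_mul]
        calc (k^2)^t ≤ (k^2-k)^t + t * k * (k^2)^(t-1) := h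
        _ = (k^2-k)^t + t * (k * k^(2*t-2)) := by rw [e1]; ring
        _ = (k^2-k)^t + t * k^(2*t-1) := by rw [e2]
      have hsp2 : (k^2 - k)^t ≤ (k^2 - k - 2*t)^t + t*(2*t) * k^(2*t-2) := by
        have h := sub_pow_aux (k^2 - k) (2*t) t
        have h3 : (k^2 - k)^(t-1) ≤ k^(2*t-2) := by
          rw [← e1]
          exact Nat.pow_le_pow_left (Nat.sub_le _ _) _
        calc (k^2-k)^t ≤ (k^2-k-2*t)^t + t*(2*t) * (k^2-k)^(t-1) := h
        _ ≤ (k^2-k-2*t)^t + t*(2*t) * k^(2*t-2) :=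
            Nat.add_le_add_left (Nat.mul_le_mul_left _ h3) _
      -- combine
      have step : chromCount Γ k + (t+1) * k^(2*t-1)
          ≤ chromCount Γ k + (t * k^(2*t-1) + C * k^(2*t-2)) := by
        calc chromCount Γ k + (t+1) * k^(2*t-1)
            ≤ k^(2*t) + (t+1) * ((t+1) * k^(2*t-2)) := hup
          _ ≤ ((k^2-k)^t + t * k^(2*t-1)) + (t+1) * ((t+1) * k^(2*t-2)) :=
              Nat.add_le_add_right hsp1 _
          _ ≤ (((k^2-k-2*t)^t + t*(2*t) * k^(2*t-2)) + t * k^(2*t-1))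
                + (t+1) * ((t+1) * k^(2*t-2)) :=
              Nat.add_le_add_right (Nat.add_le_add_right hsp2 _) _
          _ ≤ ((chromCount Γ k + t*(2*t) * k^(2*t-2)) + t * k^(2*t-1))
                + (t+1) * ((t+1) * k^(2*t-2)) :=
              Nat.add_le_add_right (Nat.add_le_add_right
                (Nat.add_le_add_right hchrom_low _) _) _
          _ = chromCount Γ k + (t * k^(2*t-1) + C * k^(2*t-2)) := by
              rw [hC]; ring
      have step2 : (t+1) * k^(2*t-1) ≤ t * k^(2*t-1) + C * k^(2*t-2) :=
        le_of_add_le_add_left step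
      have step3 : k^(2*t-1) ≤ C * k^(2*t-2) := by
        rw [Nat.succ_mul] at step2
        exact le_of_add_le_add_left step2
      have step4 : k * k^(2*t-2) ≤ C * k^(2*t-2) := by
        rw [e2]
        exact step3
      have hYpos : 0 < k^(2*t-2) := Nat.pow_pos hkpos
      have step5 : k ≤ C := Nat.le_of_mul_le_mul_right (by
        calc k * k^(2*t-2) ≤ C * k^(2*t-2) := step4) hYpos
      omega
  · -- n > 2t
    obtain ⟨k, hk1, hk2⟩ := keyPow (2*t) n hgt
    have c1 : (k + 1 - n)^n ≤ chromCount Γ k :=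
      le_trans (Nat.pow_sub_le_descFactorial k n) (chrom_ge_desc Γ k)
    have c2 : chromCount Γ k ≤ k ^ (2*t) := by
      rw [hcon k]
      exact foO_le_pow A hAanti hU k
    omega
end

section
/- Let G be a mixed graph on a finite vertex type V and let u, v be distinct vertices that are neither adjacent nor the ends of a 2-dipath. Let G+uv be the mixed graph obtained from G by adding an edge between u and v, and let G_{uv} be the mixed graph on V∖{v} in which, for distinct a, b ∈ V∖{v}: there is an arc a→b iff a→b in G, or a = u and v→b in G, or b = u and a→v in G; and there is an edge ab iff there is no arc between a and b in G_{uv} and (ab is an edge of G, or a = u and vb is an edge of G, or b = u and av is an edge of G). Then for every natural number k, f_o(G,k) = f_o(G+uv,k) + f_o(G_{uv},k). -/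
/-- Arc relation of the contraction `G_{uv}` (identify `v` into `u`, on vertex set `V \ {v}`). -/
def contractArc {V : Type*} (A : V → V → Prop) (u v : V)
    (a b : {x : V // x ≠ v}) : Prop :=
  A a.1 b.1 ∨ (a.1 = u ∧ A v b.1) ∨ (b.1 = u ∧ A a.1 v)

/-- Edge relation of the contraction `G_{uv}`: an edge remains only when the corresponding
pair does not carry an arc of `G_{uv}`. -/
def contractEdge {V : Type*} (A E : V → V → Prop) (u v : V)
    (a b : {x : V // x ≠ v}) : Prop :=
  ¬ (contractArc A u v a b ∨ contractArc A u v b a) ∧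
    (E a.1 b.1 ∨ (a.1 = u ∧ E v b.1) ∨ (b.1 = u ∧ E a.1 v))

theorem stmt_13 {V : Type*} [Fintype V] (A E : V → V → Prop)
    (hAirr : ∀ u, ¬ A u u) (hAanti : ∀ u v, A u v → ¬ A v u)
    (hEirr : ∀ u, ¬ E u u) (hEsymm : ∀ u v, E u v → E v u)
    (hAE : ∀ u v, (A u v ∨ A v u) → ¬ E u v)
    (u v : V) (huv : u ≠ v)
    (hnadj : ¬ MAdj A E u v) (hndip : ¬ DipathEnds A u v) :
    ∀ k : ℕ,
      foM A E k =
        foM A (fun a b => E a b ∨ (a = u ∧ b = v) ∨ (a = v ∧ b = u)) k +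
          foM (contractArc A u v) (contractEdge A E u v) k := by
  intro k
  classical
  have hnAuv : ¬ A u v := fun h => hnadj (Or.inl h)
  have hnAvu : ¬ A v u := fun h => hnadj (Or.inr (Or.inl h))
  have hnEuv : ¬ E u v := fun h => hnadj (Or.inr (Or.inr h))
  -- the projection map
  set π : V → {x : V // x ≠ v} := fun x => if h : x = v then ⟨u, huv⟩ else ⟨x, h⟩ with hπdef
  have hπv : π v = ⟨u, huv⟩ := by simp [hπdef]
  have hπne : ∀ (x : V) (h : x ≠ v), π x = ⟨x, h⟩ := by
    intro x h; simp [hπdef, h]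
  -- Equiv 1 : colourings with c u ≠ c v ≃ colourings of G + uv
  have e1 : {c : V → Fin k // MixedColoring A E c ∧ c u ≠ c v} ≃
      {c : V → Fin k //
        MixedColoring A (fun a b => E a b ∨ (a = u ∧ b = v) ∨ (a = v ∧ b = u)) c} := by
    refine Equiv.subtypeEquivRight (fun c => ?_)
    constructor
    · rintro ⟨⟨h1, h2⟩, hne⟩
      refine ⟨fun a b hab => ?_, h2⟩
      rcases hab with h | h | h | ⟨rfl, rfl⟩ | ⟨rfl, rfl⟩
      · exact h1 a b (Or.inl h)
      · exact h1 a b (Or.inr (Or.inl h))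
      · exact h1 a b (Or.inr (Or.inr h))
      · exact hne
      · exact fun h => hne h.symm
    · rintro ⟨h1, h2⟩
      refine ⟨⟨fun a b hab => h1 a b ?_, h2⟩,
        h1 u v (Or.inr (Or.inr (Or.inr (Or.inl ⟨rfl, rfl⟩))))⟩
      rcases hab with h | h | h
      · exact Or.inl h
      · exact Or.inr (Or.inl h)
      · exact Or.inr (Or.inr (Or.inl h))
  -- forward transfer to the contraction
  have Fwd : ∀ c : V → Fin k, MixedColoring A E c → c u = c v →
      MixedColoring (contractArc A u v) (contractEdge A E u v) (fun x => c x.1) := by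
    intro c hc heq
    obtain ⟨h1, h2⟩ := hc
    have L : ∀ a b : {x : V // x ≠ v}, contractArc A u v a b →
        ∃ a' b', A a' b' ∧ c a' = c a.1 ∧ c b' = c b.1 := by
      rintro a b (h | ⟨ha, h⟩ | ⟨hb, h⟩)
      · exact ⟨a.1, b.1, h, rfl, rfl⟩
      · exact ⟨v, b.1, h, by rw [ha]; exact heq.symm, rfl⟩
      · exact ⟨a.1, v, h, rfl, by rw [hb]; exact heq.symm⟩
    constructor
    · rintro a b (h | h | ⟨-, h⟩)
      · obtain ⟨a', b', harc, hca, hcb⟩ := L a b h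
        have := h1 a' b' (Or.inl harc)
        rw [hca, hcb] at this
        exact this
      · obtain ⟨a', b', harc, hca, hcb⟩ := L b a h
        have := h1 a' b' (Or.inl harc)
        rw [hca, hcb] at this
        exact fun hg => this hg.symm
      · rcases h with h | ⟨ha, h⟩ | ⟨hb, h⟩
        · exact h1 a.1 b.1 (Or.inr (Or.inr h))
        · have h' := h1 v b.1 (Or.inr (Or.inr h))
          show c a.1 ≠ c b.1
          rw [ha, heq]; exact h'
        · have h' := h1 a.1 v (Or.inr (Or.inr h))
          show c a.1 ≠ c b.1
          rw [hb, heq]; exact h'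
    · intro a b x y hab hxy hcay
      obtain ⟨a', b', harc1, hca, hcb⟩ := L a b hab
      obtain ⟨x', y', harc2, hcx, hcy⟩ := L x y hxy
      have := h2 a' b' x' y' harc1 harc2 (by rw [hca, hcy]; exact hcay)
      rw [hcb, hcx] at this
      exact this
  -- arcs map to arcs of the contraction
  have M : ∀ a b : V, A a b → contractArc A u v (π a) (π b) := by
    intro a b h
    by_cases ha : a = v
    · rw [ha] at h
      have hb : b ≠ v := fun hb' => hAirr v (hb' ▸ h)
      rw [ha, hπv, hπne b hb]
      exact Or.inr (Or.inl ⟨rfl, h⟩)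
    · by_cases hb : b = v
      · rw [hb] at h
        rw [hb, hπv, hπne a ha]
        exact Or.inr (Or.inr ⟨rfl, h⟩)
      · rw [hπne a ha, hπne b hb]
        exact Or.inl h
  -- backward transfer from the contraction
  have Bwd : ∀ c' : {x : V // x ≠ v} → Fin k,
      MixedColoring (contractArc A u v) (contractEdge A E u v) c' →
      MixedColoring A E (fun x => c' (π x)) := by
    intro c' hc'
    obtain ⟨h1, h2⟩ := hc'
    constructor
    · rintro a b (h | h | h)
      · exact h1 (π a) (π b) (Or.inl (M a b h))
      · exact fun hg => h1 (π b) (π a) (Or.inl (M b a h)) hg.symm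
      · by_cases harc : contractArc A u v (π a) (π b) ∨ contractArc A u v (π b) (π a)
        · rcases harc with h' | h'
          · exact h1 (π a) (π b) (Or.inl h')
          · exact fun hg => h1 (π b) (π a) (Or.inl h') hg.symm
        · refine h1 (π a) (π b) (Or.inr (Or.inr ⟨harc, ?_⟩))
          by_cases ha : a = v
          · rw [ha] at h
            have hb : b ≠ v := fun hb' => hEirr v (hb' ▸ h)
            rw [ha, hπv, hπne b hb]
            exact Or.inr (Or.inl ⟨rfl, h⟩)
          · by_cases hb : b = v
            · rw [hb] at h
              rw [hb, hπv, hπne a ha]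
              exact Or.inr (Or.inr ⟨rfl, h⟩)
            · rw [hπne a ha, hπne b hb]
              exact Or.inl h
    · intro a b x y hab hxy hcay
      exact h2 (π a) (π b) (π x) (π y) (M a b hab) (M x y hxy) hcay
  -- Equiv 2 : colourings with c u = c v ≃ colourings of the contraction
  have e2 : {c : V → Fin k // MixedColoring A E c ∧ c u = c v} ≃
      {c : {x : V // x ≠ v} → Fin k //
        MixedColoring (contractArc A u v) (contractEdge A E u v) c} :=
    { toFun := fun c => ⟨fun x => c.1 x.1, Fwd c.1 c.2.1 c.2.2⟩
      invFun := fun c' => ⟨fun x => c'.1 (π x), Bwd c'.1 c'.2, by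
        show c'.1 (π u) = c'.1 (π v)
        rw [hπv, hπne u huv]⟩
      left_inv := by
        rintro ⟨c, hc, heq⟩
        apply Subtype.ext
        funext x
        show c (π x).1 = c x
        by_cases hx : x = v
        · rw [hx, hπv]; exact heq
        · rw [hπne x hx]
      right_inv := by
        rintro ⟨c', hc'⟩
        apply Subtype.ext
        funext x
        show c' (π x.1) = c' x
        rw [hπne x.1 x.2] }
  -- splitting equiv
  have e0 : {c : V → Fin k // MixedColoring A E c} ≃
      {c : V → Fin k // MixedColoring A E c ∧ c u ≠ c v} ⊕
        {c : V → Fin k // MixedColoring A E c ∧ c u = c v} := by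
    refine Equiv.trans
      (Equiv.sumCompl (fun c : {c : V → Fin k // MixedColoring A E c} =>
        c.1 u ≠ c.1 v)).symm (Equiv.sumCongr ?_ ?_)
    · exact
        { toFun := fun x => ⟨x.1.1, x.1.2, x.2⟩
          invFun := fun c => ⟨⟨c.1, c.2.1⟩, c.2.2⟩
          left_inv := fun x => rfl
          right_inv := fun c => rfl }
    · exact
        { toFun := fun x => ⟨x.1.1, x.1.2, not_not.mp x.2⟩
          invFun := fun c => ⟨⟨c.1, c.2.1⟩, fun h => h c.2.2⟩
          left_inv := fun x => rfl
          right_inv := fun c => rfl }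
  simp only [foM]
  rw [Nat.card_congr e0, Nat.card_sum, Nat.card_congr e1, Nat.card_congr e2]
end

section
/- For n ≥ 4, let D_n be the oriented graph on n vertices consisting of a directed path v_1→v_2→v_3→v_4 together with n-4 additional vertices x_1,…,x_{n-4}, each with a single arc x_j→v_4. Then for every natural number k, f_o(D_n, k) = k(k-1)(k-2)((k-2)^{n-4} + (k-3)(k-1)^{n-4}) (an identity of integers). -/
/-- Arc relation of `D_n`: a directed path `v₁ → v₂ → v₃ → v₄` (vertices `0,1,2,3`)
together with `n - 4` leaves (vertices `4,…,n-1`), each with a single arc into `v₄`. -/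
def dArc (n : ℕ) (a b : Fin n) : Prop :=
  (a.val = 0 ∧ b.val = 1) ∨ (a.val = 1 ∧ b.val = 2) ∨ (a.val = 2 ∧ b.val = 3) ∨
  (4 ≤ a.val ∧ b.val = 3)

namespace Stmt14

open Finset

def e0 (m : ℕ) : Fin (m+4) := ⟨0, by omega⟩
def e1 (m : ℕ) : Fin (m+4) := ⟨1, by omega⟩
def e2 (m : ℕ) : Fin (m+4) := ⟨2, by omega⟩
def e3 (m : ℕ) : Fin (m+4) := ⟨3, by omega⟩
def lv (m : ℕ) (j : Fin m) : Fin (m+4) := ⟨j.val + 4, by omega⟩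

variable {m k : ℕ}

def QQ (m k : ℕ) (c : Fin (m+4) → Fin k) : Prop :=
  c (e0 m) ≠ c (e1 m) ∧ c (e0 m) ≠ c (e2 m) ∧ c (e1 m) ≠ c (e2 m) ∧
  c (e1 m) ≠ c (e3 m) ∧ c (e2 m) ≠ c (e3 m) ∧
  ∀ j : Fin (m+4), 4 ≤ j.val → c j ≠ c (e3 m) ∧ (c (e0 m) = c (e3 m) → c j ≠ c (e1 m))

def PP (k : ℕ) (q : Fin k × Fin k × Fin k × Fin k) : Prop :=
  q.1 ≠ q.2.1 ∧ q.1 ≠ q.2.2.1 ∧ q.2.1 ≠ q.2.2.1 ∧ q.2.1 ≠ q.2.2.2 ∧ q.2.2.1 ≠ q.2.2.2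

def RR (k : ℕ) (q : Fin k × Fin k × Fin k × Fin k) (x : Fin k) : Prop :=
  x ≠ q.2.2.2 ∧ (q.1 = q.2.2.2 → x ≠ q.2.1)

instance : DecidablePred (PP k) := fun q => by unfold PP; infer_instance
instance (q : Fin k × Fin k × Fin k × Fin k) : DecidablePred (RR k q) := fun x => by
  unfold RR; infer_instance

abbrev W (m k : ℕ) := (Fin k × Fin k × Fin k × Fin k) × (Fin m → Fin k)

lemma ocol_iff (c : Fin (m+4) → Fin k) : OColoring (dArc (m+4)) c ↔ QQ m k c := by
  constructor
  · rintro ⟨h1, h2⟩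
    refine ⟨h1 _ _ (Or.inl ⟨rfl, rfl⟩), ?_, h1 _ _ (Or.inr (Or.inl ⟨rfl, rfl⟩)), ?_,
      h1 _ _ (Or.inr (Or.inr (Or.inl ⟨rfl, rfl⟩))), ?_⟩
    · exact (h2 (e1 m) (e2 m) (e0 m) (e1 m) (Or.inr (Or.inl ⟨rfl, rfl⟩))
        (Or.inl ⟨rfl, rfl⟩) rfl).symm
    · exact (h2 (e2 m) (e3 m) (e1 m) (e2 m) (Or.inr (Or.inr (Or.inl ⟨rfl, rfl⟩)))
        (Or.inr (Or.inl ⟨rfl, rfl⟩)) rfl).symm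
    · intro j hj
      refine ⟨h1 _ _ (Or.inr (Or.inr (Or.inr ⟨hj, rfl⟩))), fun h03 => ?_⟩
      exact (h2 (e0 m) (e1 m) j (e3 m) (Or.inl ⟨rfl, rfl⟩)
        (Or.inr (Or.inr (Or.inr ⟨hj, rfl⟩))) h03).symm
  · rintro ⟨q01, q02, q12, q13, q23, qleaf⟩
    constructor
    · rintro u v (⟨hu, hv⟩|⟨hu, hv⟩|⟨hu, hv⟩|⟨hu, hv⟩)
      · obtain rfl : u = e0 m := Fin.ext hu
        obtain rfl : v = e1 m := Fin.ext hv
        exact q01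
      · obtain rfl : u = e1 m := Fin.ext hu
        obtain rfl : v = e2 m := Fin.ext hv
        exact q12
      · obtain rfl : u = e2 m := Fin.ext hu
        obtain rfl : v = e3 m := Fin.ext hv
        exact q23
      · obtain rfl : v = e3 m := Fin.ext hv
        exact (qleaf u hu).1
    · rintro u v x y (⟨hu, hv⟩|⟨hu, hv⟩|⟨hu, hv⟩|⟨hu, hv⟩)
        (⟨hx, hy⟩|⟨hx, hy⟩|⟨hx, hy⟩|⟨hx, hy⟩) e
      -- case (01, *)
      · obtain rfl : u = e0 m := Fin.ext hu
        obtain rfl : y = e1 m := Fin.ext hy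
        exact absurd e q01
      · obtain rfl : u = e0 m := Fin.ext hu
        obtain rfl : y = e2 m := Fin.ext hy
        exact absurd e q02
      · obtain rfl : v = e1 m := Fin.ext hv
        obtain rfl : x = e2 m := Fin.ext hx
        exact q12
      · obtain rfl : u = e0 m := Fin.ext hu
        obtain rfl : v = e1 m := Fin.ext hv
        obtain rfl : y = e3 m := Fin.ext hy
        exact fun h => (qleaf x hx).2 e h.symm
      -- case (12, *)
      · obtain rfl : v = e2 m := Fin.ext hv
        obtain rfl : x = e0 m := Fin.ext hx
        exact q02.symm
      · obtain rfl : u = e1 m := Fin.ext hu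
        obtain rfl : y = e2 m := Fin.ext hy
        exact absurd e q12
      · obtain rfl : u = e1 m := Fin.ext hu
        obtain rfl : y = e3 m := Fin.ext hy
        exact absurd e q13
      · obtain rfl : u = e1 m := Fin.ext hu
        obtain rfl : y = e3 m := Fin.ext hy
        exact absurd e q13
      -- case (23, *)
      · obtain rfl : u = e2 m := Fin.ext hu
        obtain rfl : y = e1 m := Fin.ext hy
        exact absurd e.symm q12
      · obtain rfl : v = e3 m := Fin.ext hv
        obtain rfl : x = e1 m := Fin.ext hx
        exact q13.symm
      · obtain rfl : u = e2 m := Fin.ext hu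
        obtain rfl : y = e3 m := Fin.ext hy
        exact absurd e q23
      · obtain rfl : u = e2 m := Fin.ext hu
        obtain rfl : y = e3 m := Fin.ext hy
        exact absurd e q23
      -- case (leaf, *)
      · obtain rfl : v = e3 m := Fin.ext hv
        obtain rfl : x = e0 m := Fin.ext hx
        obtain rfl : y = e1 m := Fin.ext hy
        exact fun h => (qleaf u hu).2 h.symm e
      · obtain rfl : v = e3 m := Fin.ext hv
        obtain rfl : x = e1 m := Fin.ext hx
        exact q13.symm
      · obtain rfl : y = e3 m := Fin.ext hy
        exact absurd e (qleaf u hu).1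
      · obtain rfl : y = e3 m := Fin.ext hy
        exact absurd e (qleaf u hu).1


def dec (m k : ℕ) (p : W m k) : Fin (m+4) → Fin k := fun j =>
  if h0 : j.val = 0 then p.1.1
  else if h1 : j.val = 1 then p.1.2.1
  else if h2 : j.val = 2 then p.1.2.2.1
  else if h3 : j.val = 3 then p.1.2.2.2
  else p.2 ⟨j.val - 4, by omega⟩

lemma dec_e0 (p : W m k) : dec m k p (e0 m) = p.1.1 := rfl
lemma dec_e1 (p : W m k) : dec m k p (e1 m) = p.1.2.1 := rfl
lemma dec_e2 (p : W m k) : dec m k p (e2 m) = p.1.2.2.1 := rfl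
lemma dec_e3 (p : W m k) : dec m k p (e3 m) = p.1.2.2.2 := rfl

lemma dec_ge (p : W m k) (j : Fin (m+4)) (hj : 4 ≤ j.val) :
    dec m k p j = p.2 ⟨j.val - 4, by omega⟩ := by
  unfold dec
  rw [dif_neg (by omega), dif_neg (by omega), dif_neg (by omega), dif_neg (by omega)]

lemma dec_lv (p : W m k) (j : Fin m) : dec m k p (lv m j) = p.2 j := by
  rw [dec_ge _ _ (Nat.le_add_left 4 j.val)]
  exact congrArg _ (Fin.ext (by simp [lv]))

def E (m k : ℕ) : {c : Fin (m+4) → Fin k // QQ m k c} ≃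
    {p : W m k // PP k p.1 ∧ ∀ j, RR k p.1 (p.2 j)} where
  toFun c := ⟨((c.1 (e0 m), c.1 (e1 m), c.1 (e2 m), c.1 (e3 m)), fun j => c.1 (lv m j)),
    ⟨c.2.1, c.2.2.1, c.2.2.2.1, c.2.2.2.2.1, c.2.2.2.2.2.1⟩, fun j => by
      obtain ⟨hA, hB⟩ := c.2.2.2.2.2.2 (lv m j) (Nat.le_add_left 4 j.val)
      exact ⟨hA, hB⟩⟩
  invFun p := ⟨dec m k p.1, by
    obtain ⟨⟨hab, hac, hbc, hbd, hcd⟩, hf⟩ := p.2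
    refine ⟨?_, ?_, ?_, ?_, ?_, ?_⟩
    · rw [dec_e0, dec_e1]; exact hab
    · rw [dec_e0, dec_e2]; exact hac
    · rw [dec_e1, dec_e2]; exact hbc
    · rw [dec_e1, dec_e3]; exact hbd
    · rw [dec_e2, dec_e3]; exact hcd
    · intro j hj
      rw [dec_ge _ _ hj, dec_e0, dec_e1, dec_e3]
      exact hf ⟨j.val - 4, by omega⟩⟩
  left_inv c := by
    apply Subtype.ext
    funext j
    by_cases h0 : j.val = 0
    · obtain rfl : j = e0 m := Fin.ext h0
      rfl
    · by_cases h1 : j.val = 1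
      · obtain rfl : j = e1 m := Fin.ext h1
        rfl
      · by_cases h2 : j.val = 2
        · obtain rfl : j = e2 m := Fin.ext h2
          rfl
        · by_cases h3 : j.val = 3
          · obtain rfl : j = e3 m := Fin.ext h3
            rfl
          · have hj : 4 ≤ j.val := by omega
            change dec m k _ j = _
            rw [dec_ge _ _ hj]
            show c.1 (lv m ⟨j.val - 4, _⟩) = c.1 j
            exact congrArg _ (Fin.ext (by simp [lv]; omega))
  right_inv p := by
    apply Subtype.ext
    refine Prod.ext rfl (funext fun j => ?_)
    exact dec_lv p.1 j


lemma card_ne1 (u : Fin k) : Fintype.card {x : Fin k // x ≠ u} = k - 1 := by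
  rw [Fintype.card_subtype]
  have h : univ.filter (fun x : Fin k => x ≠ u) = {u}ᶜ := by ext x; simp
  rw [h, card_compl, Fintype.card_fin, card_singleton]

lemma card_ne2 (u v : Fin k) (h : u ≠ v) :
    Fintype.card {x : Fin k // x ≠ u ∧ x ≠ v} = k - 2 := by
  rw [Fintype.card_subtype]
  have h2 : univ.filter (fun x : Fin k => x ≠ u ∧ x ≠ v) = ({u, v} : Finset (Fin k))ᶜ := by
    ext x; simp [not_or]
  rw [h2, card_compl, Fintype.card_fin,
    card_insert_of_notMem (by simp [h]), card_singleton]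

lemma card_RR (q : Fin k × Fin k × Fin k × Fin k) (hq : PP k q) :
    Fintype.card {x : Fin k // RR k q x} = if q.1 = q.2.2.2 then k - 2 else k - 1 := by
  by_cases h : q.1 = q.2.2.2
  · rw [if_pos h,
      Fintype.card_congr (Equiv.subtypeEquivRight
        (q := fun x => x ≠ q.2.2.2 ∧ x ≠ q.2.1) (fun x => by simp [RR, h]))]
    exact card_ne2 _ _ (Ne.symm hq.2.2.2.1)
  · rw [if_neg h,
      Fintype.card_congr (Equiv.subtypeEquivRight
        (q := fun x => x ≠ q.2.2.2) (fun x => by simp [RR, h]))]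
    exact card_ne1 _

lemma sum1 (a b cc : Fin k) (hab : a ≠ b) (hac : a ≠ cc) (hbc : b ≠ cc) (A B : ℕ) :
    ∑ d : Fin k, ite (PP k (a, b, cc, d)) (ite (a = d) A B) 0 = A + (k - 3) * B := by
  have hPP : ∀ d : Fin k, PP k (a, b, cc, d) ↔ (b ≠ d ∧ cc ≠ d) := fun d => by
    simp [PP, hab, hac, hbc]
  rw [← Finset.add_sum_erase univ _ (mem_univ a)]
  congr 1
  · rw [if_pos ((hPP a).mpr ⟨Ne.symm hab, Ne.symm hac⟩), if_pos rfl]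
  · have hcong : ∀ d ∈ univ.erase a,
        ite (PP k (a, b, cc, d)) (ite (a = d) A B) 0 = ite (b ≠ d ∧ cc ≠ d) B 0 := by
      intro d hd
      rw [mem_erase] at hd
      by_cases h : b ≠ d ∧ cc ≠ d
      · rw [if_pos ((hPP d).mpr h), if_neg (fun e => hd.1 e.symm), if_pos h]
      · rw [if_neg (fun hp => h ((hPP d).mp hp)), if_neg h]
    rw [Finset.sum_congr rfl hcong, Finset.sum_ite, Finset.sum_const, Finset.sum_const_zero,
      add_zero, smul_eq_mul]
    congr 1
    have hfil : (univ.erase a).filter (fun d => b ≠ d ∧ cc ≠ d) =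
        ({a, b, cc} : Finset (Fin k))ᶜ := by
      ext d
      simp only [mem_filter, mem_erase, mem_univ, and_true, true_and, mem_compl, mem_insert,
        mem_singleton, not_or]
      constructor
      · rintro ⟨h1, h2, h3⟩; exact ⟨h1, fun e => h2 e.symm, fun e => h3 e.symm⟩
      · rintro ⟨h1, h2, h3⟩; exact ⟨h1, fun e => h2 e.symm, fun e => h3 e.symm⟩
    rw [hfil, card_compl, Fintype.card_fin,
      card_insert_of_notMem (by simp [hab, hac]),
      card_insert_of_notMem (by simp [hbc]), card_singleton]

lemma sum2 (a b : Fin k) (hab : a ≠ b) (A B : ℕ) :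
    ∑ cc : Fin k, ∑ d : Fin k, ite (PP k (a, b, cc, d)) (ite (a = d) A B) 0 =
      (k - 2) * (A + (k - 3) * B) := by
  have hcong : ∀ cc ∈ (univ : Finset (Fin k)),
      ∑ d : Fin k, ite (PP k (a, b, cc, d)) (ite (a = d) A B) 0 =
        ite (a ≠ cc ∧ b ≠ cc) (A + (k - 3) * B) 0 := by
    intro cc _
    by_cases h : a ≠ cc ∧ b ≠ cc
    · rw [if_pos h]; exact sum1 a b cc hab h.1 h.2 A B
    · rw [if_neg h]
      refine Finset.sum_eq_zero fun d _ => ?_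
      rw [if_neg (fun hp => h ⟨hp.2.1, hp.2.2.1⟩)]
  rw [Finset.sum_congr rfl hcong, Finset.sum_ite, Finset.sum_const, Finset.sum_const_zero,
    add_zero, smul_eq_mul]
  congr 1
  have hfil : univ.filter (fun cc : Fin k => a ≠ cc ∧ b ≠ cc) =
      ({a, b} : Finset (Fin k))ᶜ := by
    ext cc
    simp only [mem_filter, mem_univ, true_and, mem_compl, mem_insert, mem_singleton, not_or]
    constructor
    · rintro ⟨h1, h2⟩; exact ⟨fun e => h1 e.symm, fun e => h2 e.symm⟩
    · rintro ⟨h1, h2⟩; exact ⟨fun e => h1 e.symm, fun e => h2 e.symm⟩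
  rw [hfil, card_compl, Fintype.card_fin, card_insert_of_notMem (by simp [hab]),
    card_singleton]

lemma sum4 (A B : ℕ) :
    ∑ a : Fin k, ∑ b : Fin k, ∑ cc : Fin k, ∑ d : Fin k,
        ite (PP k (a, b, cc, d)) (ite (a = d) A B) 0 =
      k * ((k - 1) * ((k - 2) * (A + (k - 3) * B))) := by
  have hcong : ∀ a ∈ (univ : Finset (Fin k)),
      ∑ b : Fin k, ∑ cc : Fin k, ∑ d : Fin k,
          ite (PP k (a, b, cc, d)) (ite (a = d) A B) 0 =
        (k - 1) * ((k - 2) * (A + (k - 3) * B)) := by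
    intro a _
    have hcong2 : ∀ b ∈ (univ : Finset (Fin k)),
        ∑ cc : Fin k, ∑ d : Fin k, ite (PP k (a, b, cc, d)) (ite (a = d) A B) 0 =
          ite (a ≠ b) ((k - 2) * (A + (k - 3) * B)) 0 := by
      intro b _
      by_cases h : a ≠ b
      · rw [if_pos h]; exact sum2 a b h A B
      · rw [if_neg h]
        refine Finset.sum_eq_zero fun cc _ => Finset.sum_eq_zero fun d _ => ?_
        rw [if_neg (fun hp => h hp.1)]
    rw [Finset.sum_congr rfl hcong2, Finset.sum_ite, Finset.sum_const, Finset.sum_const_zero,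
      add_zero, smul_eq_mul]
    congr 1
    have hfil : univ.filter (fun b : Fin k => a ≠ b) = ({a} : Finset (Fin k))ᶜ := by
      ext b
      simp only [mem_filter, mem_univ, true_and, mem_compl, mem_singleton]
      exact ⟨fun h e => h e.symm, fun h e => h e.symm⟩
    rw [hfil, card_compl, Fintype.card_fin, card_singleton]
  rw [Finset.sum_congr rfl hcong, Finset.sum_const, card_univ, Fintype.card_fin, smul_eq_mul]

lemma card_count :
    Fintype.card {p : W m k // PP k p.1 ∧ ∀ j, RR k p.1 (p.2 j)} =
      k * ((k - 1) * ((k - 2) * ((k - 2) ^ m + (k - 3) * (k - 1) ^ m))) := by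
  rw [Fintype.card_congr (Equiv.subtypeProdEquivSigmaSubtype
    (fun (q : Fin k × Fin k × Fin k × Fin k) (f : Fin m → Fin k) =>
      PP k q ∧ ∀ j, RR k q (f j)))]
  rw [Fintype.card_sigma]
  have key : ∀ q : Fin k × Fin k × Fin k × Fin k,
      Fintype.card {f : Fin m → Fin k // PP k q ∧ ∀ j, RR k q (f j)} =
        ite (PP k q) (ite (q.1 = q.2.2.2) ((k - 2) ^ m) ((k - 1) ^ m)) 0 := by
    intro q
    by_cases hq : PP k q
    · rw [if_pos hq,
        Fintype.card_congr ((Equiv.subtypeEquivRight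
          (fun f => and_iff_right hq)).trans Equiv.subtypePiEquivPi),
        Fintype.card_pi]
      rw [Finset.prod_congr rfl (fun j _ => card_RR q hq), Finset.prod_const, card_univ,
        Fintype.card_fin]
      by_cases h : q.1 = q.2.2.2
      · rw [if_pos h, if_pos h]
      · rw [if_neg h, if_neg h]
    · rw [if_neg hq]
      have : IsEmpty {f : Fin m → Fin k // PP k q ∧ ∀ j, RR k q (f j)} :=
        ⟨fun f => hq f.2.1⟩
      exact Fintype.card_eq_zero
  rw [Finset.sum_congr rfl (fun q _ => key q)]
  have := sum4 (k := k) ((k - 2) ^ m) ((k - 1) ^ m)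
  rw [← this]
  rw [Fintype.sum_prod_type]
  refine Finset.sum_congr rfl fun a _ => ?_
  rw [Fintype.sum_prod_type]
  refine Finset.sum_congr rfl fun b _ => ?_
  rw [Fintype.sum_prod_type]

end Stmt14

theorem stmt_14 (n : ℕ) (hn : 4 ≤ n) :
    ∀ k : ℕ,
      (foO (dArc n) k : ℤ) =
        (k : ℤ) * ((k : ℤ) - 1) * ((k : ℤ) - 2) *
          (((k : ℤ) - 2) ^ (n - 4) + ((k : ℤ) - 3) * ((k : ℤ) - 1) ^ (n - 4)) := by
  obtain ⟨m, rfl⟩ : ∃ m, n = m + 4 := ⟨n - 4, by omega⟩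
  intro k
  have hm : m + 4 - 4 = m := by omega
  have hcard : foO (dArc (m + 4)) k =
      k * ((k - 1) * ((k - 2) * ((k - 2) ^ m + (k - 3) * (k - 1) ^ m))) := by
    unfold foO
    rw [Nat.card_congr ((Equiv.subtypeEquivRight
      (fun c => Stmt14.ocol_iff c)).trans (Stmt14.E m k))]
    rw [Nat.card_eq_fintype_card]
    exact Stmt14.card_count
  rw [hm, hcard]
  rcases le_or_gt k 2 with hk | hk
  · interval_cases k <;> norm_num
  · have h1 : ((k - 1 : ℕ) : ℤ) = (k : ℤ) - 1 := by omega
    have h2 : ((k - 2 : ℕ) : ℤ) = (k : ℤ) - 2 := by omega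
    have h3 : ((k - 3 : ℕ) : ℤ) = (k : ℤ) - 3 := by omega
    push_cast [h1, h2, h3]
    ring
end

section
/- For every real number K > 0 there exist a natural number n ≥ 4 and a real number x with x < -K such that p_n(x) = 0, where p_n(x) = x(x-1)(x-2)((x-2)^{n-4} + (x-3)(x-1)^{n-4}). (Since p_n is the oriented chromatic polynomial of the oriented graph D_n, this shows that for every K > 0 there is an oriented graph whose oriented chromatic polynomial has a real root less than -K; moreover the root can be taken in the interval (-n, -ln n) with n even.) -/
set_option maxRecDepth 100000
set_option maxHeartbeats 1000000

/-- The oriented chromatic polynomial of the oriented graph `D_n` (a directed path on four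
vertices `v₁ → v₂ → v₃ → v₄` together with `n - 4` leaves, each with an arc into `v₄`). -/
noncomputable def pD (n : ℕ) (x : ℝ) : ℝ :=
  x * (x - 1) * (x - 2) * ((x - 2) ^ (n - 4) + (x - 3) * (x - 1) ^ (n - 4))

theorem stmt_15 :
    ∀ K : ℝ, 0 < K → ∃ n : ℕ, 4 ≤ n ∧ Even n ∧
      ∃ x : ℝ, x < -K ∧ -(n : ℝ) < x ∧ x < -Real.log n ∧ pD n x = 0 := by
  intro K hK
  set n : ℕ := 2 * ⌈Real.exp K⌉₊ + 5500 with hn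
  have hn4 : 4 ≤ n := by omega
  have hneven : Even n := ⟨⌈Real.exp K⌉₊ + 2750, by omega⟩
  refine ⟨n, hn4, hneven, ?_⟩
  set m : ℕ := n - 4 with hm
  obtain ⟨j, hj⟩ : Even m := by
    obtain ⟨k, hk⟩ := hneven
    exact ⟨k - 2, by omega⟩
  have hmeven : Even m := ⟨j, hj⟩
  have hnR : (5500 : ℝ) ≤ (n : ℝ) := by
    have : (5500 : ℕ) ≤ n := by omega
    exact_mod_cast this
  set s : ℝ := Real.sqrt n with hsdef
  have hs0 : 0 ≤ s := Real.sqrt_nonneg _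
  have hs2 : s * s = (n : ℝ) := Real.mul_self_sqrt (by positivity)
  have hs74 : (74 : ℝ) ≤ s := by
    have h74 : (74 : ℝ) = Real.sqrt (74 * 74) := (Real.sqrt_mul_self (by norm_num)).symm
    rw [hsdef, h74]
    exact Real.sqrt_le_sqrt (by linarith)
  have hmn : (m : ℝ) + 4 = (n : ℝ) := by
    have : m + 4 = n := by omega
    exact_mod_cast this
  have hJ : 2 * (j : ℝ) + 4 = s * s := by
    have : (m : ℝ) = 2 * (j : ℝ) := by exact_mod_cast (by omega : m = 2 * j)
    rw [hs2]; linarith [hmn]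
  set f : ℝ → ℝ := fun x => (x - 2) ^ m + (x - 3) * (x - 1) ^ m with hf
  have hcont : ContinuousOn f (Set.Icc (-(n : ℝ)) (-(2 * s))) := by
    refine Continuous.continuousOn ?_
    rw [hf]
    exact ((continuous_id.sub continuous_const).pow m).add
      ((continuous_id.sub continuous_const).mul ((continuous_id.sub continuous_const).pow m))
  -- f(-n) < 0
  have hA : f (-(n : ℝ)) < 0 := by
    have e1 : (-(n : ℝ) - 2) ^ m = ((n : ℝ) + 2) ^ m := by
      rw [show (-(n : ℝ) - 2) = -((n : ℝ) + 2) by ring, hmeven.neg_pow]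
    have e2 : (-(n : ℝ) - 1) ^ m = ((n : ℝ) + 1) ^ m := by
      rw [show (-(n : ℝ) - 1) = -((n : ℝ) + 1) by ring, hmeven.neg_pow]
    have hkey : ((n : ℝ) + 2) ^ m < ((n : ℝ) + 3) * ((n : ℝ) + 1) ^ m := by
      have hpos : (0 : ℝ) < (n : ℝ) + 1 := by positivity
      have h1 : ((n : ℝ) + 2) ≤ ((n : ℝ) + 1) * Real.exp (1 / ((n : ℝ) + 1)) := by
        have he := Real.add_one_le_exp (1 / ((n : ℝ) + 1))
        have h := mul_le_mul_of_nonneg_left he (le_of_lt hpos)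
        calc ((n : ℝ) + 2) = ((n : ℝ) + 1) * (1 / ((n : ℝ) + 1) + 1) := by
              field_simp; ring
          _ ≤ _ := h
      have h2 : ((n : ℝ) + 2) ^ m ≤ (((n : ℝ) + 1) * Real.exp (1 / ((n : ℝ) + 1))) ^ m :=
        pow_le_pow_left₀ (by positivity) h1 m
      have h3 : (((n : ℝ) + 1) * Real.exp (1 / ((n : ℝ) + 1))) ^ m =
          ((n : ℝ) + 1) ^ m * Real.exp ((m : ℝ) * (1 / ((n : ℝ) + 1))) := by
        rw [mul_pow, Real.exp_nat_mul]
      have h4 : Real.exp ((m : ℝ) * (1 / ((n : ℝ) + 1))) ≤ Real.exp 1 := by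
        apply Real.exp_le_exp.mpr
        rw [mul_one_div, div_le_one hpos]
        linarith
      have h5 : Real.exp 1 < 3 := by
        have := Real.exp_one_lt_d9; linarith
      have hp : (0 : ℝ) < ((n : ℝ) + 1) ^ m := by positivity
      calc ((n : ℝ) + 2) ^ m ≤ ((n : ℝ) + 1) ^ m * Real.exp ((m : ℝ) * (1 / ((n : ℝ) + 1))) := by
            rw [← h3]; exact h2
        _ ≤ ((n : ℝ) + 1) ^ m * Real.exp 1 := by nlinarith
        _ < ((n : ℝ) + 1) ^ m * 3 := by nlinarith
        _ ≤ ((n : ℝ) + 3) * ((n : ℝ) + 1) ^ m := by nlinarith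
    show (-(n : ℝ) - 2) ^ m + (-(n : ℝ) - 3) * (-(n : ℝ) - 1) ^ m < 0
    rw [e1, e2]
    nlinarith [hkey]
  -- f(-2s) > 0
  have hB : 0 < f (-(2 * s)) := by
    set t : ℝ := 1 / (2 * s + 1) with htd
    have hsp : (0 : ℝ) < 2 * s + 1 := by linarith
    have ht0 : 0 < t := by positivity
    have htprod : (2 * s + 1) * (1 + t) = 2 * s + 2 := by
      rw [htd]; field_simp; ring
    have hbern : 1 + (j : ℝ) * t ≤ (1 + t) ^ j := one_add_mul_le_pow (by linarith) j
    have hjt0 : (0 : ℝ) ≤ 1 + (j : ℝ) * t := by positivity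
    have hsq : (1 + (j : ℝ) * t) * (1 + (j : ℝ) * t) ≤ (1 + t) ^ m := by
      rw [hj, pow_add]
      exact mul_le_mul hbern hbern hjt0 (le_trans hjt0 hbern)
    have hkey : (2 * s + 3) < (1 + (j : ℝ) * t) * (1 + (j : ℝ) * t) := by
      have e : 1 + (j : ℝ) * t = ((2 * s + 1) + (j : ℝ)) * t := by
        rw [htd]; field_simp
      rw [e, show ((2*s+1) + (j:ℝ)) * t * (((2*s+1) + (j:ℝ)) * t)
            = (((2*s+1) + (j:ℝ)) * ((2*s+1) + (j:ℝ))) * (t * t) by ring]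
      have ht2 : t * t = 1 / ((2 * s + 1) * (2 * s + 1)) := by
        rw [htd]; field_simp
      rw [ht2, mul_one_div, lt_div_iff₀ (by positivity)]
      nlinarith [hJ, hs74, hs0, mul_nonneg (mul_nonneg (sub_nonneg.mpr hs74) hs0) hs0,
        mul_nonneg (sub_nonneg.mpr hs74) hs0, sq_nonneg s, sq_nonneg (s - 74)]
    have hpow : (2 * s + 2) ^ m = (2 * s + 1) ^ m * (1 + t) ^ m := by
      rw [← mul_pow, htprod]
    have hppos : (0 : ℝ) < (2 * s + 1) ^ m := by positivity
    have e1 : (-(2 * s) - 2) ^ m = (2 * s + 2) ^ m := by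
      rw [show (-(2 * s) - 2) = -(2 * s + 2) by ring, hmeven.neg_pow]
    have e2 : (-(2 * s) - 1) ^ m = (2 * s + 1) ^ m := by
      rw [show (-(2 * s) - 1) = -(2 * s + 1) by ring, hmeven.neg_pow]
    have hmain : (2 * s + 3) * (2 * s + 1) ^ m < (2 * s + 2) ^ m := by
      rw [hpow]
      calc (2 * s + 3) * (2 * s + 1) ^ m
          < ((1 + (j:ℝ)*t) * (1 + (j:ℝ)*t)) * (2 * s + 1) ^ m :=
            mul_lt_mul_of_pos_right hkey hppos
        _ ≤ (2 * s + 1) ^ m * (1 + t) ^ m := by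
            rw [mul_comm]
            exact mul_le_mul_of_nonneg_left hsq (le_of_lt hppos)
    show 0 < (-(2 * s) - 2) ^ m + (-(2 * s) - 3) * (-(2 * s) - 1) ^ m
    rw [e1, e2]
    nlinarith [hmain]
  -- IVT
  have hab : -(n : ℝ) ≤ -(2 * s) := by nlinarith [hs2, hs74, hs0]
  obtain ⟨x, hxmem, hfx⟩ := intermediate_value_Ioo hab hcont ⟨hA, hB⟩
  obtain ⟨hx1, hx2⟩ := hxmem
  have hnpos : (0 : ℝ) < (n : ℝ) := by linarith
  have hlog2s : Real.log n < 2 * s := by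
    have hl : Real.log (n : ℝ) = 2 * Real.log s := by
      rw [← hs2, Real.log_mul (by linarith) (by linarith)]; ring
    have hls : Real.log s ≤ s - 1 := Real.log_le_sub_one_of_pos (by linarith)
    linarith
  have hKlog : K < Real.log n := by
    have hexplt : Real.exp K < (n : ℝ) := by
      have h1 : Real.exp K ≤ (⌈Real.exp K⌉₊ : ℝ) := Nat.le_ceil _
      have h2 : (⌈Real.exp K⌉₊ : ℝ) < (n : ℝ) := by
        exact_mod_cast (by omega : ⌈Real.exp K⌉₊ < n)
      linarith
    calc K = Real.log (Real.exp K) := (Real.log_exp K).symm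
      _ < Real.log n := Real.log_lt_log (Real.exp_pos K) hexplt
  refine ⟨x, by linarith, hx1, by linarith, ?_⟩
  have hfx0 : (x - 2) ^ m + (x - 3) * (x - 1) ^ m = 0 := hfx
  show x * (x - 1) * (x - 2) * ((x - 2) ^ m + (x - 3) * (x - 1) ^ m) = 0
  rw [hfx0, mul_zero]
end

section
/- Let H be the mixed graph on four vertices a, b, c, d with arcs a→b and c→d, and edges between the tails a, c and between the heads b, d. Then for every natural number k, f_o(H,k) = k(k-1)²(k-2) = k⁴ - 4k³ + 5k² - 2k, and the arcs a→b and c→d form a pair of obstructing arcs in H. (Thus a mixed graph with a pair of obstructing arcs can nevertheless have the same counting function as the chromatic polynomial of a simple graph, namely the triangle with a pendant vertex.) -/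
/-- Arcs of the mixed graph `H`: `a → b` and `c → d` (vertices `0 → 1` and `2 → 3`). -/
def hArc (a b : Fin 4) : Prop := (a = 0 ∧ b = 1) ∨ (a = 2 ∧ b = 3)

/-- Edges of the mixed graph `H`: between the tails `a, c` and between the heads `b, d`. -/
def hEdge (a b : Fin 4) : Prop :=
  (a = 0 ∧ b = 2) ∨ (a = 2 ∧ b = 0) ∨ (a = 1 ∧ b = 3) ∨ (a = 3 ∧ b = 1)

open Finset

def Qp {k : ℕ} (p : Fin k × Fin k × Fin k × Fin k) : Prop :=
  p.1 ≠ p.2.1 ∧ p.1 ≠ p.2.2.1 ∧ p.2.2.2 ≠ p.2.2.1 ∧ p.2.2.2 ≠ p.2.1 ∧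
    ¬(p.1 = p.2.2.2 ∧ p.2.1 = p.2.2.1)

instance {k : ℕ} : DecidablePred (Qp (k := k)) := fun _ => by
  unfold Qp; infer_instance

instance (a b : Fin 4) : Decidable (hArc a b) := by unfold hArc; infer_instance
instance (a b : Fin 4) : Decidable (hEdge a b) := by unfold hEdge; infer_instance
instance (u v : Fin 4) : Decidable (MAdj hArc hEdge u v) := by unfold MAdj; infer_instance
instance (u v : Fin 4) : Decidable (DipathEnds hArc u v) := by unfold DipathEnds; infer_instance

lemma mc_iff {k : ℕ} (c : Fin 4 → Fin k) :
    MixedColoring hArc hEdge c ↔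
      (c 0 ≠ c 1 ∧ c 0 ≠ c 2 ∧ c 3 ≠ c 2 ∧ c 3 ≠ c 1 ∧ ¬(c 0 = c 3 ∧ c 1 = c 2)) := by
  constructor
  · rintro ⟨h1, h2⟩
    refine ⟨h1 0 1 (Or.inl (Or.inl ⟨rfl, rfl⟩)),
      h1 0 2 (Or.inr (Or.inr (Or.inl ⟨rfl, rfl⟩))),
      (h1 2 3 (Or.inl (Or.inr ⟨rfl, rfl⟩))).symm,
      (h1 1 3 (Or.inr (Or.inr (Or.inr (Or.inr (Or.inl ⟨rfl, rfl⟩)))))).symm, ?_⟩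
    rintro ⟨e1, e2⟩
    exact h2 0 1 2 3 (Or.inl ⟨rfl, rfl⟩) (Or.inr ⟨rfl, rfl⟩) e1 e2
  · rintro ⟨h1, h3, h2, h4, h5⟩
    constructor
    · rintro u v (((⟨rfl, rfl⟩ | ⟨rfl, rfl⟩) : hArc u v) |
        ((⟨rfl, rfl⟩ | ⟨rfl, rfl⟩) : hArc v u) |
        ((⟨rfl, rfl⟩ | ⟨rfl, rfl⟩ | ⟨rfl, rfl⟩ | ⟨rfl, rfl⟩) : hEdge u v)) <;>
        first
          | exact h1 | exact h2 | exact h3 | exact h4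
          | exact h1.symm | exact h2.symm | exact h3.symm | exact h4.symm
    · rintro u v x y ((⟨rfl, rfl⟩ | ⟨rfl, rfl⟩) : hArc u v)
        ((⟨rfl, rfl⟩ | ⟨rfl, rfl⟩) : hArc x y) he hc
      · exact h1 he
      · exact h5 ⟨he, hc⟩
      · exact h5 ⟨hc.symm, he.symm⟩
      · exact h2.symm he

lemma card_ne_two {k : ℕ} (a b : Fin k) (hab : a ≠ b) :
    (univ.filter (fun z : Fin k => z ≠ a ∧ z ≠ b)).card = k - 2 := by
  have h : univ.filter (fun z : Fin k => z ≠ a ∧ z ≠ b) = univ \ {a, b} := by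
    ext z; simp [not_or]
  rw [h, card_sdiff_of_subset (by simp)]
  simp [card_insert_of_notMem, hab, Fintype.card_fin]

lemma card_ne_one {k : ℕ} (a : Fin k) :
    (univ.filter (fun z : Fin k => a ≠ z)).card = k - 1 := by
  have h : univ.filter (fun z : Fin k => a ≠ z) = univ \ {a} := by
    ext z; simp [ne_comm]
  rw [h, card_sdiff_of_subset (by simp)]
  simp

lemma sum_ite_ne {k : ℕ} (a : Fin k) (m : ℕ) :
    ∑ x : Fin k, (if a ≠ x then m else 0) = (k - 1) * m := by
  rw [Finset.sum_ite, Finset.sum_const, Finset.sum_const_zero, add_zero, smul_eq_mul,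
    card_ne_one]

lemma count_Q {k : ℕ} :
    (univ.filter (Qp (k := k))).card = k * ((k - 1) * ((k - 1) * (k - 2))) := by
  rw [Finset.card_filter, Fintype.sum_prod_type]
  have hz : ∀ w x y : Fin k,
      (∑ z : Fin k, if Qp (w, x, y, z) then 1 else 0) =
        if w ≠ x ∧ w ≠ y then k - 2 else 0 := by
    intro w x y
    by_cases h : w ≠ x ∧ w ≠ y
    · rw [if_pos h]
      have hc : ∀ z : Fin k, (if Qp (w, x, y, z) then 1 else 0) =
          if (z ≠ y ∧ z ≠ x ∧ ¬(w = z ∧ x = y)) then 1 else 0 := by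
        intro z
        simp only [Qp]
        by_cases hq : z ≠ y ∧ z ≠ x ∧ ¬(w = z ∧ x = y)
        · exact (if_pos (show Qp (w, x, y, z) from ⟨h.1, h.2, hq.1, hq.2.1, fun hh => hq.2.2 ⟨hh.1, hh.2⟩⟩)).trans (if_pos hq).symm
        · exact (if_neg (show ¬ Qp (w, x, y, z) from fun hh => hq ⟨hh.2.2.1, hh.2.2.2.1, hh.2.2.2.2⟩)).trans (if_neg hq).symm
      rw [Finset.sum_congr rfl (fun z _ => hc z), ← Finset.card_filter]
      by_cases hxy : x = y
      · subst hxy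
        have : (univ.filter (fun z : Fin k => z ≠ x ∧ z ≠ x ∧ ¬(w = z ∧ x = x))) =
            univ.filter (fun z : Fin k => z ≠ x ∧ z ≠ w) := by
          ext z; simp only [mem_filter, mem_univ, true_and, and_true, eq_comm (a := w)]
          tauto
        rw [this, card_ne_two _ _ (fun hh => h.1 hh.symm)]
      · have : (univ.filter (fun z : Fin k => z ≠ y ∧ z ≠ x ∧ ¬(w = z ∧ x = y))) =
            univ.filter (fun z : Fin k => z ≠ y ∧ z ≠ x) := by
          ext z; simp only [mem_filter, mem_univ, true_and]
          exact ⟨fun hh => ⟨hh.1, hh.2.1⟩, fun hh => ⟨hh.1, hh.2, fun hc => hxy hc.2⟩⟩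
        rw [this, card_ne_two _ _ (fun hh => hxy hh.symm)]
    · rw [if_neg h]
      refine Finset.sum_eq_zero (fun z _ => ?_)
      exact if_neg (fun hq => h ⟨hq.1, hq.2.1⟩)
  calc ∑ w : Fin k, ∑ p : Fin k × Fin k × Fin k, (if Qp (w, p) then 1 else 0)
      = ∑ w : Fin k, ∑ x : Fin k, ∑ y : Fin k, (if w ≠ x ∧ w ≠ y then k - 2 else 0) := by
        refine Finset.sum_congr rfl (fun w _ => ?_)
        rw [Fintype.sum_prod_type]
        refine Finset.sum_congr rfl (fun x _ => ?_)
        rw [Fintype.sum_prod_type]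
        refine Finset.sum_congr rfl (fun y _ => ?_)
        exact hz w x y
    _ = ∑ w : Fin k, ∑ x : Fin k, (if w ≠ x then (k - 1) * (k - 2) else 0) := by
        refine Finset.sum_congr rfl (fun w _ => Finset.sum_congr rfl (fun x _ => ?_))
        by_cases hwx : w ≠ x
        · rw [if_pos hwx]
          have hy : ∀ y : Fin k, (if w ≠ x ∧ w ≠ y then k - 2 else 0) =
              (if w ≠ y then k - 2 else 0) := fun y => by simp [hwx]
          rw [Finset.sum_congr rfl (fun y _ => hy y)]
          exact sum_ite_ne w (k - 2)
        · rw [if_neg hwx]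
          exact Finset.sum_eq_zero (fun y _ => if_neg (fun hq => hwx hq.1))
    _ = ∑ _w : Fin k, (k - 1) * ((k - 1) * (k - 2)) := by
        refine Finset.sum_congr rfl (fun w _ => ?_)
        exact sum_ite_ne w ((k - 1) * (k - 2))
    _ = k * ((k - 1) * ((k - 1) * (k - 2))) := by
        rw [Finset.sum_const, smul_eq_mul, card_univ, Fintype.card_fin]

lemma foM_eq (k : ℕ) : foM hArc hEdge k = k * ((k - 1) * ((k - 1) * (k - 2))) := by
  have e : {c : Fin 4 → Fin k // MixedColoring hArc hEdge c} ≃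
      {p : Fin k × Fin k × Fin k × Fin k // Qp p} :=
    { toFun := fun c => ⟨(c.1 0, c.1 1, c.1 2, c.1 3), by
        have h := (mc_iff c.1).mp c.2
        exact ⟨h.1, h.2.1, h.2.2.1, h.2.2.2.1, h.2.2.2.2⟩⟩
      invFun := fun p => ⟨![p.1.1, p.1.2.1, p.1.2.2.1, p.1.2.2.2], by
        rw [mc_iff]
        simpa [Qp] using p.2⟩
      left_inv := fun c => by
        ext i
        fin_cases i <;> simp
      right_inv := fun p => by
        simp }
  rw [foM, Nat.card_congr e, Nat.card_eq_fintype_card, Fintype.card_subtype, count_Q]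

theorem stmt_19 :
    (∀ k : ℕ,
      (foM hArc hEdge k : ℤ) = (k : ℤ) * ((k : ℤ) - 1) ^ 2 * ((k : ℤ) - 2) ∧
      (foM hArc hEdge k : ℤ) =
        (k : ℤ) ^ 4 - 4 * (k : ℤ) ^ 3 + 5 * (k : ℤ) ^ 2 - 2 * (k : ℤ)) ∧
    ObstructingPair hArc hEdge (0, 1) (2, 3) := by
  constructor
  · intro k
    have h1 : (foM hArc hEdge k : ℤ) = (k : ℤ) * ((k : ℤ) - 1) ^ 2 * ((k : ℤ) - 2) := by
      rw [foM_eq]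
      match k with
      | 0 => norm_num
      | 1 => norm_num
      | (n + 2) =>
        have e1 : n + 2 - 1 = n + 1 := rfl
        have e2 : n + 2 - 2 = n := rfl
        rw [e1, e2]
        push_cast
        ring
    exact ⟨h1, by rw [h1]; ring⟩
  · unfold ObstructingPair
    decide
end
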